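/- arXiv:2108.03450 — 9 statements merged into one kernel-verified Lean document; each statement's English description precedes it below -/
import Mathlib

section
/- Let μ and ν be Borel probability measures on ℝ with finite first moments such that every point of the topological support of ν is less than or equal to every point of the topological support of μ, and such that μ({ℓ})·ν({ℓ}) = 0 where ℓ = inf(supp μ). Let G_μ and G_ν denote the left-continuous quantile functions of μ and ν respectively, and define T : (0,1) → ℝ by T(u) = G_ν(1−u). Then T is non-increasing, T is right-continuous, T(u) < G_μ(u) for all u ∈ (0,1), and the pushforward of the Lebesgue measure on (0,1) under the map u ↦ (G_μ(u), T(u)) is a supermartingale coupling of μ and ν. -/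
open MeasureTheory Set Filter

noncomputable section

/-- `η ∈ 𝓜`: a finite Borel measure on ℝ with finite first moment. -/
def MemM (η : MeasureTheory.Measure ℝ) : Prop :=
  MeasureTheory.IsFiniteMeasure η ∧ MeasureTheory.Integrable (fun x : ℝ => x) η

/-- Convex-decreasing order `≤_cd`. -/
def LeCD (η χ : MeasureTheory.Measure ℝ) : Prop :=
  ∀ f : ℝ → ℝ, ConvexOn ℝ Set.univ f → Antitone f →
    MeasureTheory.Integrable f η → MeasureTheory.Integrable f χ →
    ∫ x, f x ∂η ≤ ∫ x, f x ∂χ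

/-- Positive convex-decreasing order `≤_pcd`. -/
def LePCD (η χ : MeasureTheory.Measure ℝ) : Prop :=
  ∀ f : ℝ → ℝ, (∀ x, 0 ≤ f x) → ConvexOn ℝ Set.univ f → Antitone f →
    MeasureTheory.Integrable f η → MeasureTheory.Integrable f χ →
    ∫ x, f x ∂η ≤ ∫ x, f x ∂χ

/-- Positive convex order `≤_pc`. -/
def LePC (η χ : MeasureTheory.Measure ℝ) : Prop :=
  ∀ f : ℝ → ℝ, (∀ x, 0 ≤ f x) → ConvexOn ℝ Set.univ f →
    MeasureTheory.Integrable f η → MeasureTheory.Integrable f χ →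
    ∫ x, f x ∂η ≤ ∫ x, f x ∂χ

/-- A supermartingale coupling of `η` and `χ`. -/
def IsSupermartingaleCoupling (η χ : MeasureTheory.Measure ℝ)
    (π : MeasureTheory.Measure (ℝ × ℝ)) : Prop :=
  MeasureTheory.IsProbabilityMeasure π ∧
  π.map Prod.fst = η ∧ π.map Prod.snd = χ ∧
  MeasureTheory.Integrable (fun p : ℝ × ℝ => p.2) π ∧
  ∀ B : Set ℝ, MeasurableSet B →
    ∫ p in B ×ˢ (Set.univ : Set ℝ), (p : ℝ × ℝ).2 ∂π ≤ ∫ x in B, x ∂η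

/-- The potential function `P_η(k) = ∫ (k-x)⁺ η(dx)`. -/
def Ppot (η : MeasureTheory.Measure ℝ) (k : ℝ) : ℝ := ∫ x, max (k - x) 0 ∂η

/-- The potential function `C_η(k) = ∫ (x-k)⁺ η(dx)`. -/
def Cpot (η : MeasureTheory.Measure ℝ) (k : ℝ) : ℝ := ∫ x, max (x - k) 0 ∂η

/-- The left-continuous quantile function `G_η(u) = sup {k | η((-∞,k]) < u}`. -/
def quantile (η : MeasureTheory.Measure ℝ) (u : ℝ) : ℝ :=
  sSup {k : ℝ | (η (Set.Iic k)).toReal < u}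

/-- The lift `μ_u = μ|_{(-∞,G(u))} + (u - μ((-∞,G(u)))) δ_{G(u)}`, with `μ_0 = 0`, `μ_1 = μ`. -/
def muU (μ : MeasureTheory.Measure ℝ) (u : ℝ) : MeasureTheory.Measure ℝ :=
  if u ≤ 0 then 0
  else if 1 ≤ u then μ
  else μ.restrict (Set.Iio (quantile μ u)) +
    (ENNReal.ofReal (u - (μ (Set.Iio (quantile μ u))).toReal)) •
      MeasureTheory.Measure.dirac (quantile μ u)

/-- `S` is a shadow of `μ` in `ν`. -/
def IsShadow (μ ν S : MeasureTheory.Measure ℝ) : Prop :=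
  MemM S ∧ LeCD μ S ∧ (∀ A : Set ℝ, MeasurableSet A → S A ≤ ν A) ∧
  ∀ η : MeasureTheory.Measure ℝ, MemM η → LeCD μ η →
    (∀ A : Set ℝ, MeasurableSet A → η A ≤ ν A) → LeCD S η

/-- `h` is the convex hull of `f`. -/
def IsConvexHullFn (f h : ℝ → ℝ) : Prop :=
  ConvexOn ℝ Set.univ h ∧ (∀ x, h x ≤ f x) ∧
  ∀ g : ℝ → ℝ, ConvexOn ℝ Set.univ g → (∀ x, g x ≤ f x) → ∀ x, g x ≤ h x

/-- The class `𝒟(a,b)`. -/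
def MemD (a b : ℝ) (f : ℝ → ℝ) : Prop :=
  (∀ x, 0 ≤ f x) ∧ Monotone f ∧ ConvexOn ℝ Set.univ f ∧
  Filter.Tendsto f Filter.atBot (nhds 0) ∧
  Filter.Tendsto (fun z => f z - (a * z - b)) Filter.atTop (nhds 0)

/-- The topological support of a measure. -/
def msupport (η : MeasureTheory.Measure ℝ) : Set ℝ :=
  {x : ℝ | ∀ U ∈ nhds x, η U ≠ 0}


/-! ### Auxiliary lemmas -/

section Aux

lemma myF_mono (η : Measure ℝ) [IsProbabilityMeasure η] :
    Monotone (fun k : ℝ => (η (Iic k)).toReal) := fun a b hab =>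
  ENNReal.toReal_mono (measure_ne_top η _) (measure_mono (Iic_subset_Iic.2 hab))

lemma myF_le_one (η : Measure ℝ) [IsProbabilityMeasure η] (k : ℝ) :
    (η (Iic k)).toReal ≤ 1 := by
  have : η (Iic k) ≤ 1 := prob_le_one
  simpa using ENNReal.toReal_mono (by norm_num) this

lemma myF_tendsto_atTop (η : Measure ℝ) [IsProbabilityMeasure η] :
    Tendsto (fun k : ℝ => (η (Iic k)).toReal) atTop (nhds 1) := by
  have h := tendsto_measure_Iic_atTop (α := ℝ) η
  rw [measure_univ] at h
  have h2 := (ENNReal.tendsto_toReal ENNReal.one_ne_top).comp h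
  simpa [Function.comp_def] using h2

lemma myF_tendsto_atBot (η : Measure ℝ) [IsProbabilityMeasure η] :
    Tendsto (fun k : ℝ => (η (Iic k)).toReal) atBot (nhds 0) := by
  have hI : ⋂ k : ℝ, Iic k = (∅ : Set ℝ) := by
    ext y; simp only [mem_iInter, mem_Iic, mem_empty_iff_false, iff_false, not_forall, not_le]
    exact ⟨y - 1, by linarith⟩
  have h := tendsto_measure_iInter_atBot (μ := η) (s := fun k : ℝ => Iic k)
    (fun k => nullMeasurableSet_Iic) monotone_Iic ⟨0, measure_ne_top η _⟩
  rw [hI, measure_empty] at h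
  have h2 := (ENNReal.tendsto_toReal ENNReal.zero_ne_top).comp h
  simpa [Function.comp_def] using h2

lemma myS_nonempty (η : Measure ℝ) [IsProbabilityMeasure η] {u : ℝ} (hu : 0 < u) :
    {k : ℝ | (η (Iic k)).toReal < u}.Nonempty :=
  ((myF_tendsto_atBot η).eventually_lt_const hu).exists

lemma myS_bddAbove (η : Measure ℝ) [IsProbabilityMeasure η] {u : ℝ} (hu : u < 1) :
    BddAbove {k : ℝ | (η (Iic k)).toReal < u} := by
  obtain ⟨K, hK⟩ := eventually_atTop.mp ((myF_tendsto_atTop η).eventually_const_lt hu)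
  exact ⟨K, fun k hk => le_of_not_gt fun h => absurd (hK k h.le) (not_lt.2 hk.le)⟩

lemma quantile_le_iff (η : Measure ℝ) [IsProbabilityMeasure η] {u x : ℝ}
    (hu0 : 0 < u) (hu1 : u < 1) :
    quantile η u ≤ x ↔ u ≤ (η (Iic x)).toReal := by
  constructor
  · intro h
    by_contra hx
    push_neg at hx
    have hI : ⋂ n : ℕ, Iic (x + 1/(n+1)) = Iic x := by
      ext y
      simp only [mem_iInter, mem_Iic]
      constructor
      · intro hy
        refine le_of_forall_pos_le_add fun ε hε => ?_
        obtain ⟨n, hn⟩ := exists_nat_one_div_lt hε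
        exact (hy n).trans (by linarith)
      · intro hy n
        have : (0:ℝ) < 1/(n+1) := by positivity
        linarith
    have hanti : Antitone fun n : ℕ => Iic (x + 1/(n+1) : ℝ) := by
      intro a b hab
      apply Iic_subset_Iic.2
      have hc : ((a:ℝ)+1) ≤ (b:ℝ)+1 := by exact_mod_cast Nat.succ_le_succ hab
      have : (1:ℝ)/(b+1) ≤ 1/(a+1) := one_div_le_one_div_of_le (by positivity) hc
      linarith
    have h2 := tendsto_measure_iInter_atTop (μ := η) (s := fun n : ℕ => Iic (x + 1/(n+1)))
      (fun n => nullMeasurableSet_Iic) hanti ⟨0, measure_ne_top η _⟩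
    rw [hI] at h2
    have h3 := (ENNReal.tendsto_toReal (measure_ne_top η (Iic x))).comp h2
    obtain ⟨n, hn⟩ := (h3.eventually_lt_const hx).exists
    have hk : x + 1/(n+1:ℝ) ∈ {k : ℝ | (η (Iic k)).toReal < u} := hn
    have hle := le_csSup (myS_bddAbove η hu1) hk
    have hpos : (0:ℝ) < 1/(n+1) := by positivity
    have : x < quantile η u := lt_of_lt_of_le (by linarith) hle
    exact absurd h (not_le.2 this)
  · intro h
    refine csSup_le (myS_nonempty η hu0) fun k hk => ?_
    by_contra hxk
    push_neg at hxk
    exact absurd (lt_of_le_of_lt (h.trans (myF_mono η hxk.le)) hk) (lt_irrefl _)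

lemma lt_quantile_iff (η : Measure ℝ) [IsProbabilityMeasure η] {u x : ℝ}
    (hu0 : 0 < u) (hu1 : u < 1) :
    x < quantile η u ↔ (η (Iic x)).toReal < u := by
  rw [← not_le, ← not_le, quantile_le_iff η hu0 hu1]

lemma quantile_monotoneOn (η : Measure ℝ) [IsProbabilityMeasure η] :
    MonotoneOn (quantile η) (Ioo (0:ℝ) 1) := by
  intro u hu v hv huv
  exact csSup_le_csSup (myS_bddAbove η hv.2) (myS_nonempty η hu.1)
    (fun k hk => lt_of_lt_of_le hk huv)

lemma quantile_aemeasurable (η : Measure ℝ) [IsProbabilityMeasure η] :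
    AEMeasurable (quantile η) (volume.restrict (Ioo (0:ℝ) 1)) :=
  aemeasurable_restrict_of_monotoneOn measurableSet_Ioo (quantile_monotoneOn η)

instance : IsProbabilityMeasure (volume.restrict (Ioo (0:ℝ) 1)) :=
  ⟨by simp [Real.volume_Ioo]⟩

lemma quantile_map (η : Measure ℝ) [IsProbabilityMeasure η] :
    (volume.restrict (Ioo (0:ℝ) 1)).map (quantile η) = η := by
  have hae := quantile_aemeasurable η
  have : IsProbabilityMeasure ((volume.restrict (Ioo (0:ℝ) 1)).map (quantile η)) :=
    Measure.isProbabilityMeasure_map hae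
  refine Measure.ext_of_Iic _ η fun x => ?_
  rw [Measure.map_apply_of_aemeasurable hae measurableSet_Iic,
    Measure.restrict_apply' measurableSet_Ioo]
  set t := (η (Iic x)).toReal with ht
  have ht0 : 0 ≤ t := ENNReal.toReal_nonneg
  have ht1 : t ≤ 1 := myF_le_one η x
  have hset : quantile η ⁻¹' (Iic x) ∩ Ioo 0 1 = Iic t ∩ Ioo 0 1 := by
    ext u
    simp only [mem_inter_iff, mem_preimage, mem_Iic, mem_Ioo, and_congr_left_iff]
    intro hu
    rw [quantile_le_iff η hu.1 hu.2]
  rw [hset]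
  rcases lt_or_eq_of_le ht1 with h1 | h1
  · have : Iic t ∩ Ioo (0:ℝ) 1 = Ioc 0 t := by
      ext u
      simp only [mem_inter_iff, mem_Iic, mem_Ioo, mem_Ioc]
      constructor
      · rintro ⟨h, h2, h3⟩; exact ⟨h2, h⟩
      · rintro ⟨h2, h⟩; exact ⟨h, h2, lt_of_le_of_lt h h1⟩
    rw [this, Real.volume_Ioc, sub_zero, ht, ENNReal.ofReal_toReal (measure_ne_top η _)]
  · have : Iic t ∩ Ioo (0:ℝ) 1 = Ioo 0 1 := by
      rw [inter_eq_self_of_subset_right]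
      intro u hu
      simp only [mem_Iic]; rw [← h1] at hu; exact hu.2.le
    rw [this, Real.volume_Ioo, sub_zero, ENNReal.ofReal_one]
    have h2 : η (Iic x) = 1 := by
      rw [← ENNReal.toReal_eq_one_iff, ← ht]
      exact h1
    exact h2.symm

lemma msupport_compl_null (η : Measure ℝ) : η (msupport η)ᶜ = 0 := by
  apply measure_null_of_locally_null
  intro x hx
  simp only [msupport, mem_compl_iff, mem_setOf_eq] at hx
  push_neg at hx
  obtain ⟨U, hU, hU0⟩ := hx
  exact ⟨U, nhdsWithin_le_nhds hU, hU0⟩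

lemma msupport_nonempty (η : Measure ℝ) [IsProbabilityMeasure η] :
    (msupport η).Nonempty := by
  by_contra h
  rw [not_nonempty_iff_eq_empty] at h
  have h2 := msupport_compl_null η
  rw [h, compl_empty, measure_univ] at h2
  norm_num at h2

lemma reflect_measurePreserving :
    MeasurePreserving (fun u : ℝ => 1 - u)
      (volume.restrict (Ioo (0:ℝ) 1)) (volume.restrict (Ioo (0:ℝ) 1)) := by
  have h : MeasurePreserving (fun u : ℝ => 1 - u) volume volume := by
    have h1 := (measurePreserving_add_left (volume : Measure ℝ) 1).comp
      (Measure.measurePreserving_neg (volume : Measure ℝ))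
    have h2 : ((fun x : ℝ => 1 + x) ∘ fun x : ℝ => -x) = (fun u : ℝ => 1 - u) := by
      funext x; simp [sub_eq_add_neg]
    rwa [h2] at h1
  have hpre : (fun u : ℝ => 1 - u) ⁻¹' (Ioo 0 1) = Ioo 0 1 := by
    ext u
    simp only [mem_preimage, mem_Ioo]
    constructor <;> (rintro ⟨h1, h2⟩; constructor <;> linarith)
  have h3 := h.restrict_preimage (measurableSet_Ioo (a := (0:ℝ)) (b := 1))
  rwa [hpre] at h3

lemma T_map (ν : Measure ℝ) [IsProbabilityMeasure ν] :
    (volume.restrict (Ioo (0:ℝ) 1)).map (fun u => quantile ν (1 - u)) = ν := by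
  have hmp := reflect_measurePreserving
  have h1 : AEMeasurable (fun u : ℝ => 1 - u) (volume.restrict (Ioo (0:ℝ) 1)) :=
    (measurable_const.sub measurable_id).aemeasurable
  have h2 : AEMeasurable (quantile ν)
      ((volume.restrict (Ioo (0:ℝ) 1)).map (fun u : ℝ => 1 - u)) := by
    rw [hmp.map_eq]; exact quantile_aemeasurable ν
  have h3 := AEMeasurable.map_map_of_aemeasurable h2 h1
  rw [hmp.map_eq] at h3
  have hc : (quantile ν ∘ fun u : ℝ => 1 - u) = fun u : ℝ => quantile ν (1 - u) := rfl
  rw [hc] at h3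
  rw [← h3]
  exact quantile_map ν

lemma integrable_of_map (η : Measure ℝ) [IsProbabilityMeasure η]
    (h : Integrable (fun x : ℝ => x) η) (f : ℝ → ℝ)
    (hf : AEMeasurable f (volume.restrict (Ioo (0:ℝ) 1)))
    (hmap : (volume.restrict (Ioo (0:ℝ) 1)).map f = η) :
    Integrable f (volume.restrict (Ioo (0:ℝ) 1)) := by
  have h2 : Integrable (fun x : ℝ => x) ((volume.restrict (Ioo (0:ℝ) 1)).map f) :=
    hmap ▸ h
  have h3 := (integrable_map_measure measurable_id.aestronglyMeasurable hf).1 h2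
  simpa [Function.comp] using h3

end Aux

/-- Proposition 4.10: the antitone map `T(u) = G_ν(1-u)` defines the increasing
supermartingale coupling when the support of `ν` lies to the left of that of `μ`. -/
theorem antitone_map_supermartingale_coupling
    (μ ν : MeasureTheory.Measure ℝ)
    [MeasureTheory.IsProbabilityMeasure μ] [MeasureTheory.IsProbabilityMeasure ν]
    (hμ : MeasureTheory.Integrable (fun x : ℝ => x) μ)
    (hν : MeasureTheory.Integrable (fun x : ℝ => x) ν)
    (hsupp : ∀ x ∈ msupport ν, ∀ y ∈ msupport μ, x ≤ y)
    (hatom : μ {sInf (msupport μ)} * ν {sInf (msupport μ)} = 0) :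
    AntitoneOn (fun u => quantile ν (1 - u)) (Set.Ioo (0:ℝ) 1) ∧
    (∀ u ∈ Set.Ioo (0:ℝ) 1,
      ContinuousWithinAt (fun u => quantile ν (1 - u)) (Set.Ici u) u) ∧
    (∀ u ∈ Set.Ioo (0:ℝ) 1, quantile ν (1 - u) < quantile μ u) ∧
    IsSupermartingaleCoupling μ ν
      ((MeasureTheory.volume.restrict (Set.Ioo (0:ℝ) 1)).map
        (fun u : ℝ => (quantile μ u, quantile ν (1 - u)))) := by
  classical
  set m := volume.restrict (Ioo (0:ℝ) 1) with hm
  set T : ℝ → ℝ := fun u => quantile ν (1 - u) with hTdef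
  -- Part 1: antitone
  have hanti : AntitoneOn T (Ioo (0:ℝ) 1) := by
    intro u hu v hv huv
    exact quantile_monotoneOn ν ⟨by linarith [hv.2], by linarith [hv.1]⟩
      ⟨by linarith [hu.2], by linarith [hu.1]⟩ (by linarith)
  -- support facts
  have hμsupp_ne : (msupport μ).Nonempty := msupport_nonempty μ
  obtain ⟨x₀, hx₀⟩ := msupport_nonempty ν
  set l := sInf (msupport μ) with hl
  have hbdd : BddBelow (msupport μ) := ⟨x₀, fun y hy => hsupp x₀ hx₀ y hy⟩
  have hνIic : ν (Iic l) = 1 := by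
    have hsub : Ioi l ⊆ (msupport ν)ᶜ := by
      intro z hz hzν
      exact absurd hz (not_lt.2 (le_csInf hμsupp_ne fun y hy => hsupp z hzν y hy))
    have h0 : ν (Ioi l) = 0 := measure_mono_null hsub (msupport_compl_null ν)
    have h1 := measure_add_measure_compl (μ := ν) (measurableSet_Iic (a := l))
    rwa [compl_Iic, h0, add_zero, measure_univ] at h1
  have hμIio : μ (Iio l) = 0 := by
    apply measure_mono_null _ (msupport_compl_null μ)
    intro z hz hzμ
    exact absurd (csInf_le hbdd hzμ) (not_le.2 hz)
  -- Part 3: strict inequality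
  have hlt : ∀ u ∈ Ioo (0:ℝ) 1, T u < quantile μ u := by
    intro u hu
    have hu0 := hu.1; have hu1 := hu.2
    have hw0 : (0:ℝ) < 1 - u := by linarith
    have hw1 : 1 - u < 1 := by linarith
    have hTle : T u ≤ l := by
      rw [hTdef]
      exact (quantile_le_iff ν hw0 hw1).2 (by rw [hνIic]; norm_num; linarith)
    have hlq : l ≤ quantile μ u := by
      refine le_of_forall_lt fun c hc => ?_
      obtain ⟨c', hc1, hc2⟩ := exists_between hc
      have hc'S : (μ (Iic c')).toReal < u := by
        have h0 : μ (Iic c') = 0 :=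
          measure_mono_null (fun z hz => lt_of_le_of_lt hz hc2) hμIio
        rw [h0]; simpa using hu0
      exact lt_of_lt_of_le hc1 (le_csSup (myS_bddAbove μ hu1) hc'S)
    rcases mul_eq_zero.1 hatom with hμl | hνl
    · have hFl : (μ (Iic l)).toReal < u := by
        have h2 : μ (Iic l) = 0 := by
          rw [← Iio_union_right]
          exact measure_union_null hμIio hμl
        rw [h2]; simpa using hu0
      exact lt_of_le_of_lt hTle ((lt_quantile_iff μ hu0 hu1).2 hFl)
    · have hIio : ν (Iio l) = 1 := by
        rw [← hνIic]
        exact measure_congr (Iio_ae_eq_Iic' hνl)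
      have hmono : Monotone fun n : ℕ => Iic (l - 1/(n+1) : ℝ) := by
        intro a b hab
        apply Iic_subset_Iic.2
        have hc : ((a:ℝ)+1) ≤ (b:ℝ)+1 := by exact_mod_cast Nat.succ_le_succ hab
        have : (1:ℝ)/(b+1) ≤ 1/(a+1) := one_div_le_one_div_of_le (by positivity) hc
        linarith
      have hU : ⋃ n : ℕ, Iic (l - 1/(n+1) : ℝ) = Iio l := by
        ext y
        simp only [mem_iUnion, mem_Iic, mem_Iio]
        constructor
        · rintro ⟨n, hn⟩
          have : (0:ℝ) < 1/(n+1) := by positivity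
          linarith
        · intro hy
          obtain ⟨n, hn⟩ := exists_nat_one_div_lt (sub_pos.2 hy)
          exact ⟨n, by linarith⟩
      have h5 := tendsto_measure_iUnion_atTop (μ := ν) hmono
      rw [hU, hIio] at h5
      have h6 := (ENNReal.tendsto_toReal ENNReal.one_ne_top).comp h5
      simp only [Function.comp_def] at h6
      obtain ⟨n, hn⟩ := (h6.eventually_const_lt hw1).exists
      have h7 : T u ≤ l - 1/(n+1) := by
        rw [hTdef]
        exact (quantile_le_iff ν hw0 hw1).2 hn.le
      have hpos : (0:ℝ) < 1/(n+1) := by positivity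
      calc T u ≤ l - 1/(n+1) := h7
        _ < l := by linarith
        _ ≤ quantile μ u := hlq
  -- Part 2: right continuity
  have hrc : ∀ u ∈ Ioo (0:ℝ) 1, ContinuousWithinAt T (Ici u) u := by
    intro u hu
    rw [Metric.continuousWithinAt_iff]
    intro ε hε
    have hw0 : (0:ℝ) < 1 - u := by linarith [hu.2]
    have hw1 : 1 - u < 1 := by linarith [hu.1]
    have hlt' : quantile ν (1-u) - ε/2 < sSup {k : ℝ | (ν (Iic k)).toReal < 1-u} := by
      have : quantile ν (1-u) = sSup {k : ℝ | (ν (Iic k)).toReal < 1-u} := rfl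
      linarith [this]
    obtain ⟨k, hkS, hk⟩ := exists_lt_of_lt_csSup (myS_nonempty ν hw0) hlt'
    have hkF : (ν (Iic k)).toReal < 1 - u := hkS
    refine ⟨min ((1-u) - (ν (Iic k)).toReal) ((1-u)/2), lt_min (by linarith) (by linarith), fun v hv hdist => ?_⟩
    have hvu : u ≤ v := hv
    rw [Real.dist_eq, abs_of_nonneg (by linarith)] at hdist
    have hv1 : v < 1 := by
      have := lt_of_lt_of_le hdist (min_le_right _ _)
      linarith
    have hv0 : 0 < v := lt_of_lt_of_le hu.1 hvu
    have hd1 : v - u < (1-u) - (ν (Iic k)).toReal :=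
      lt_of_lt_of_le hdist (min_le_left _ _)
    have hkF' : (ν (Iic k)).toReal < 1 - v := by linarith
    have hTvk : k ≤ T v := le_csSup (myS_bddAbove ν (by linarith : 1 - v < 1)) hkF'
    have hTvu : T v ≤ T u :=
      hanti ⟨hu.1, hu.2⟩ ⟨hv0, hv1⟩ hvu
    rw [Real.dist_eq, abs_of_nonpos (by linarith)]
    have : T u - ε/2 < T v := lt_of_lt_of_le hk hTvk
    linarith
  -- Part 4: the coupling
  have hTanti_ae : AEMeasurable T m :=
    aemeasurable_restrict_of_antitoneOn measurableSet_Ioo hanti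
  set f : ℝ → ℝ × ℝ := fun u => (quantile μ u, T u) with hfdef
  have hfae : AEMeasurable f m := (quantile_aemeasurable μ).prodMk hTanti_ae
  have hmapfst : (m.map f).map Prod.fst = μ := by
    rw [AEMeasurable.map_map_of_aemeasurable measurable_fst.aemeasurable hfae]
    have : (Prod.fst ∘ f) = quantile μ := rfl
    rw [this]
    exact quantile_map μ
  have hmapsnd : (m.map f).map Prod.snd = ν := by
    rw [AEMeasurable.map_map_of_aemeasurable measurable_snd.aemeasurable hfae]
    have : (Prod.snd ∘ f) = T := rfl
    rw [this, hTdef]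
    exact T_map ν
  have hprob : IsProbabilityMeasure (m.map f) := Measure.isProbabilityMeasure_map hfae
  have hintT : Integrable T m := integrable_of_map ν hν T hTanti_ae (by rw [hTdef]; exact T_map ν)
  have hintG : Integrable (quantile μ) m :=
    integrable_of_map μ hμ (quantile μ) (quantile_aemeasurable μ) (quantile_map μ)
  have hintsnd : Integrable (fun p : ℝ × ℝ => p.2) (m.map f) := by
    refine (integrable_map_measure measurable_snd.aestronglyMeasurable hfae).2 ?_
    simpa [Function.comp_def, hfdef] using hintT
  refine ⟨hanti, hrc, hlt, hprob, hmapfst, hmapsnd, hintsnd, ?_⟩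
  intro B hB
  have hBm : MeasurableSet (B ×ˢ (univ : Set ℝ)) := hB.prod MeasurableSet.univ
  rw [setIntegral_map hBm measurable_snd.aestronglyMeasurable hfae]
  have hpre : f ⁻¹' (B ×ˢ (univ : Set ℝ)) = quantile μ ⁻¹' B := by
    ext u; simp [hfdef]
  rw [hpre]
  conv_rhs => rw [← quantile_map μ]
  rw [setIntegral_map (f := fun x : ℝ => x) hB measurable_id.aestronglyMeasurable (quantile_aemeasurable μ)]
  have hae_le : ∀ᵐ u ∂(m.restrict (quantile μ ⁻¹' B)), T u ≤ quantile μ u := by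
    apply ae_restrict_of_ae
    filter_upwards [ae_restrict_mem measurableSet_Ioo] with u hu
    exact (hlt u hu).le
  exact integral_mono_ae (hintT.restrict) (hintG.restrict) hae_le
end
end

section
/- Let η, χ ∈ 𝓜 have disjoint topological supports, with the support of η nonempty and bounded; set ℓ = inf(supp η) and r = sup(supp η). If 0 < η(ℝ) ≤ min( χ((−∞,ℓ]), χ([r,∞)) ), then η ≤_pc χ. -/
open MeasureTheory Set Filter

noncomputable section

/-- On a set of positive measure, there is a point where the function is at most its average. -/
lemma exists_mul_le_setIntegral (μ : MeasureTheory.Measure ℝ) [IsFiniteMeasure μ]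
    {s : Set ℝ} (hs : MeasurableSet s) (hμs : μ s ≠ 0) {f : ℝ → ℝ}
    (hf : MeasureTheory.Integrable f μ) :
    ∃ y ∈ s, (μ s).toReal * f y ≤ ∫ x in s, f x ∂μ := by
  by_contra h
  push_neg at h
  set I := ∫ x in s, f x ∂μ with hI
  set m := (μ s).toReal with hmdef
  have hm : 0 < m := ENNReal.toReal_pos hμs (measure_ne_top μ s)
  have hae : ∀ᵐ y ∂μ.restrict s, I / m < f y := by
    filter_upwards [ae_restrict_mem hs] with y hy
    have := h y hy
    rw [div_lt_iff₀ hm]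
    linarith [this]
  have hnn : 0 ≤ᵐ[μ.restrict s] fun y => f y - I / m := by
    filter_upwards [hae] with y hy
    simp only [Pi.zero_apply]
    linarith
  have hint : MeasureTheory.Integrable (fun y => f y - I / m) (μ.restrict s) :=
    hf.integrableOn.sub (integrable_const _)
  have hzero : ∫ y in s, (f y - I / m) ∂μ = 0 := by
    rw [integral_sub hf.integrableOn (integrable_const _), setIntegral_const]
    simp only [smul_eq_mul, ← hI, measureReal_def, ← hmdef]
    field_simp
    ring
  have haeeq : (fun y => f y - I / m) =ᵐ[μ.restrict s] 0 :=
    (integral_eq_zero_iff_of_nonneg_ae hnn hint).1 hzero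
  have hne : (ae (μ.restrict s)).NeBot := by
    rw [ae_neBot, Ne, Measure.restrict_eq_zero]
    exact hμs
  obtain ⟨y, h1, h2⟩ := (haeeq.and hae).exists
  simp only [Pi.zero_apply] at h1
  linarith

lemma convex_pt {f : ℝ → ℝ} (hf0 : ∀ x, 0 ≤ f x) (hf : ConvexOn ℝ Set.univ f)
    {y x z : ℝ} (hyx : y ≤ x) (hxz : x ≤ z) : f x ≤ f y + f z := by
  rcases eq_or_lt_of_le (hyx.trans hxz) with h | h
  · have hx : x = y := le_antisymm (h ▸ hxz) hyx
    subst hx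
    linarith [hf0 z]
  · set a := (z - x) / (z - y) with hadef
    set b := (x - y) / (z - y) with hbdef
    have hzy : 0 < z - y := by linarith
    have ha : 0 ≤ a := div_nonneg (by linarith) hzy.le
    have hb : 0 ≤ b := div_nonneg (by linarith) hzy.le
    have hab : a + b = 1 := by rw [hadef, hbdef]; field_simp; ring
    have hx : a * y + b * z = x := by rw [hadef, hbdef]; field_simp; ring
    have hkey := hf.2 (Set.mem_univ y) (Set.mem_univ z) ha hb hab
    simp only [smul_eq_mul] at hkey
    rw [hx] at hkey
    nlinarith [mul_nonneg (by linarith : (0:ℝ) ≤ 1 - a) (hf0 y),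
      mul_nonneg (by linarith : (0:ℝ) ≤ 1 - b) (hf0 z)]

/-- Lemma 2.3: a sufficient condition for the positive convex order when the
supports are disjoint. -/
theorem lePC_of_disjoint_support
    (η χ : MeasureTheory.Measure ℝ) (hη : MemM η) (hχ : MemM χ)
    (hdisj : Disjoint (msupport η) (msupport χ))
    (hne : (msupport η).Nonempty)
    (hbdd : Bornology.IsBounded (msupport η))
    (hpos : 0 < η Set.univ)
    (hle : η Set.univ ≤
      min (χ (Set.Iic (sInf (msupport η)))) (χ (Set.Ici (sSup (msupport η))))) :
    LePC η χ := by
  haveI := hη.1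
  haveI := hχ.1
  intro f hf0 hfc hfη hfχ
  set S := msupport η with hSdef
  set l := sInf S with hldef
  set r := sSup S with hrdef
  -- basic facts about the support
  have hSclosed : IsClosed S := by
    rw [← isOpen_compl_iff, isOpen_iff_mem_nhds]
    intro x hx
    simp only [hSdef, msupport, mem_compl_iff, mem_setOf_eq, not_forall] at hx
    obtain ⟨U, hU, hU0⟩ := hx
    push_neg at hU0
    refine mem_of_superset (interior_mem_nhds.2 hU) fun y hy => ?_
    simp only [mem_compl_iff, hSdef, msupport, mem_setOf_eq, not_forall]
    exact ⟨interior U, isOpen_interior.mem_nhds hy, by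
      push_neg
      exact measure_mono_null interior_subset hU0⟩
  have hnull : η Sᶜ = 0 := by
    apply measure_null_of_locally_null
    intro x hx
    simp only [mem_compl_iff, hSdef, msupport, mem_setOf_eq, not_forall] at hx
    obtain ⟨U, hU, hU0⟩ := hx
    push_neg at hU0
    exact ⟨U, mem_nhdsWithin_of_mem_nhds hU, hU0⟩
  have hbdB : BddBelow S := hbdd.bddBelow
  have hbdA : BddAbove S := hbdd.bddAbove
  have hlS : l ∈ S := hSclosed.csInf_mem hne hbdB
  have hrS : r ∈ S := hSclosed.csSup_mem hne hbdA
  have hlr : l ≤ r := csInf_le hbdB hrS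
  have hsub : S ⊆ Set.Icc l r := fun x hx => ⟨csInf_le hbdB hx, le_csSup hbdA hx⟩
  -- mass facts
  have hMfin : η Set.univ ≠ ⊤ := measure_ne_top η Set.univ
  set M := (η Set.univ).toReal with hMdef
  have hMpos : 0 < M := ENNReal.toReal_pos hpos.ne' hMfin
  rw [le_min_iff] at hle
  have hm1 : η Set.univ ≤ χ (Set.Iic l) := hle.1
  have hm2 : η Set.univ ≤ χ (Set.Ici r) := hle.2
  have hm1ne : χ (Set.Iic l) ≠ 0 := fun h => (hpos.trans_le hm1).ne' h
  have hm2ne : χ (Set.Ici r) ≠ 0 := fun h => (hpos.trans_le hm2).ne' h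
  have hm1le : M ≤ (χ (Set.Iic l)).toReal :=
    (ENNReal.toReal_le_toReal hMfin (measure_ne_top χ _)).2 hm1
  have hm2le : M ≤ (χ (Set.Ici r)).toReal :=
    (ENNReal.toReal_le_toReal hMfin (measure_ne_top χ _)).2 hm2
  -- choose good points
  obtain ⟨y, hy, hyle⟩ := exists_mul_le_setIntegral χ measurableSet_Iic hm1ne hfχ
  obtain ⟨z, hz, hzle⟩ := exists_mul_le_setIntegral χ measurableSet_Ici hm2ne hfχ
  rw [Set.mem_Iic] at hy
  rw [Set.mem_Ici] at hz
  -- bound the η-integral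
  have hmem : ∀ᵐ x ∂η, x ∈ S := by
    rw [ae_iff]
    simpa [Set.compl_def] using hnull
  have haeη : ∀ᵐ x ∂η, f x ≤ f y + f z := by
    filter_upwards [hmem] with x hx
    obtain ⟨h1, h2⟩ := hsub hx
    exact convex_pt hf0 hfc (hy.trans h1) (h2.trans hz)
  have h1 : ∫ x, f x ∂η ≤ M * (f y + f z) := by
    calc ∫ x, f x ∂η ≤ ∫ _x, (f y + f z) ∂η :=
          integral_mono_ae hfη (integrable_const _) haeη
      _ = M * (f y + f z) := by rw [integral_const]; simp [smul_eq_mul, measureReal_def, hMdef]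
  have h2 : M * f y ≤ ∫ x in Set.Iic l, f x ∂χ :=
    le_trans (mul_le_mul_of_nonneg_right hm1le (hf0 y)) hyle
  have h3 : M * f z ≤ ∫ x in Set.Ici r, f x ∂χ :=
    le_trans (mul_le_mul_of_nonneg_right hm2le (hf0 z)) hzle
  -- χ puts no mass at l if l = r
  have h4 : ∫ x in Set.Ici r, f x ∂χ ≤ ∫ x in Set.Ioi l, f x ∂χ := by
    rcases eq_or_lt_of_le hlr with heq | hlt
    · have hlnot : l ∉ msupport χ := Set.disjoint_left.1 hdisj hlS
      simp only [msupport, mem_setOf_eq, not_forall] at hlnot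
      obtain ⟨U, hU, hU0⟩ := hlnot
      push_neg at hU0
      have hχl : χ {l} = 0 :=
        measure_mono_null (Set.singleton_subset_iff.2 (mem_of_mem_nhds hU)) hU0
      have hset : Set.Ici r =ᵐ[χ] Set.Ioi l := by
        rw [← heq]
        rw [MeasureTheory.ae_eq_set]
        constructor
        · rw [Set.Ici_sdiff_Ioi, Set.Icc_self]
          exact hχl
        · rw [Set.diff_eq_empty.2 Set.Ioi_subset_Ici_self]
          exact measure_empty
      exact (setIntegral_congr_set hset).le
    · exact setIntegral_mono_set hfχ.integrableOn
        (Filter.Eventually.of_forall fun x => hf0 x)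
        (HasSubset.Subset.eventuallyLE (Set.Ici_subset_Ioi.2 hlt))
  have h5 : ∫ x in Set.Iic l, f x ∂χ + ∫ x in Set.Ioi l, f x ∂χ = ∫ x, f x ∂χ := by
    rw [← Set.compl_Iic]
    exact integral_add_compl measurableSet_Iic hfχ
  linarith
end
end

section
/- Let η and χ be Borel probability measures on ℝ with finite first moments such that η ≤_cd χ, and suppose P_η(x) = P_χ(x) for some x ∈ ℝ. Then every supermartingale coupling π of η and χ satisfies π((−∞,x)×(x,∞)) + π((x,∞)×(−∞,x)) = 0. -/
open MeasureTheory Set Filter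

noncomputable section

/-- Lemma 2.4: if the potentials of `η` and `χ` touch at `x`, then no mass
crosses `x` under any supermartingale coupling. -/
theorem no_mass_crosses_touching_point
    (η χ : MeasureTheory.Measure ℝ)
    [MeasureTheory.IsProbabilityMeasure η] [MeasureTheory.IsProbabilityMeasure χ]
    (hη : MeasureTheory.Integrable (fun x : ℝ => x) η)
    (hχ : MeasureTheory.Integrable (fun x : ℝ => x) χ)
    (hcd : LeCD η χ) (x : ℝ) (hx : Ppot η x = Ppot χ x)
    (π : MeasureTheory.Measure (ℝ × ℝ)) (hπ : IsSupermartingaleCoupling η χ π) :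
    π (Set.Iio x ×ˢ Set.Ioi x) + π (Set.Ioi x ×ˢ Set.Iio x) = 0 := by
  obtain ⟨hprob, hfst, hsnd, hintY, hsup⟩ := hπ
  set A : Set (ℝ × ℝ) := Set.Iio x ×ˢ (Set.univ : Set ℝ) with hA
  have hmA : MeasurableSet A := measurableSet_Iio.prod MeasurableSet.univ
  -- integrability of the first coordinate
  have hintX : Integrable (fun p : ℝ × ℝ => p.1) π := by
    have h := hη
    rw [← hfst] at h
    exact (integrable_map_measure h.aestronglyMeasurable
      measurable_fst.aemeasurable).mp h
  have hintXm : Integrable (fun p : ℝ × ℝ => max (x - p.1) 0) π :=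
    ((integrable_const x).sub hintX).pos_part
  have hintYm : Integrable (fun p : ℝ × ℝ => max (x - p.2) 0) π :=
    ((integrable_const x).sub hintY).pos_part
  have hintYm' : Integrable (fun p : ℝ × ℝ => max (p.2 - x) 0) π :=
    (hintY.sub (integrable_const x)).pos_part
  -- potentials as integrals against π
  have hPη : Ppot η x = ∫ p, max (x - (p : ℝ × ℝ).1) 0 ∂π := by
    rw [Ppot, ← hfst, integral_map measurable_fst.aemeasurable]
    exact (Continuous.max (by continuity) continuous_const).aestronglyMeasurable
  have hPχ : Ppot χ x = ∫ p, max (x - (p : ℝ × ℝ).2) 0 ∂π := by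
    rw [Ppot, ← hsnd, integral_map measurable_snd.aemeasurable]
    exact (Continuous.max (by continuity) continuous_const).aestronglyMeasurable
  -- supermartingale property on Iio x
  have hkey : ∫ p in A, (p : ℝ × ℝ).2 ∂π ≤ ∫ p in A, (p : ℝ × ℝ).1 ∂π := by
    have h1 := hsup (Set.Iio x) measurableSet_Iio
    have h2 : ∫ t in Set.Iio x, t ∂η = ∫ p in A, (p : ℝ × ℝ).1 ∂π := by
      rw [← hfst, setIntegral_map measurableSet_Iio
        (by rw [hfst]; exact hη.aestronglyMeasurable) measurable_fst.aemeasurable]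
      rw [hA, Set.prod_univ]
    rw [h2] at h1
    exact h1
  -- decomposition of Ppot η x
  have hηA : Ppot η x = ∫ p in A, (x - (p : ℝ × ℝ).1) ∂π := by
    rw [hPη, ← integral_add_compl hmA hintXm]
    have hc : ∫ p in Aᶜ, max (x - (p : ℝ × ℝ).1) 0 ∂π = 0 := by
      rw [setIntegral_congr_fun hmA.compl (g := fun _ => (0:ℝ)) ?_, integral_zero]
      intro p hp
      simp only [hA, Set.mem_compl_iff, Set.mem_prod, Set.mem_Iio, Set.mem_univ,
        and_true, not_lt] at hp
      simp [max_eq_right, sub_nonpos.mpr hp]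
    rw [hc, add_zero]
    refine setIntegral_congr_fun hmA ?_
    intro p hp
    simp only [hA, Set.mem_prod, Set.mem_Iio, Set.mem_univ, and_true] at hp
    simp [max_eq_left, sub_nonneg.mpr hp.le]
  -- decomposition of Ppot χ x
  have hpt : ∀ p : ℝ × ℝ, max (x - p.2) 0 = (x - p.2) + max (p.2 - x) 0 := by
    intro p
    rcases le_total p.2 x with h | h
    · rw [max_eq_left (sub_nonneg.mpr h), max_eq_right (sub_nonpos.mpr h), add_zero]
    · rw [max_eq_right (sub_nonpos.mpr h), max_eq_left (sub_nonneg.mpr h)]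
      ring
  have hχA : Ppot χ x = (∫ p in A, (x - (p : ℝ × ℝ).2) ∂π)
      + (∫ p in A, max ((p : ℝ × ℝ).2 - x) 0 ∂π)
      + (∫ p in Aᶜ, max (x - (p : ℝ × ℝ).2) 0 ∂π) := by
    rw [hPχ, ← integral_add_compl hmA hintYm]
    congr 1
    calc ∫ p in A, max (x - (p : ℝ × ℝ).2) 0 ∂π
        = ∫ p in A, ((x - (p : ℝ × ℝ).2) + max ((p : ℝ × ℝ).2 - x) 0) ∂π := by
          exact integral_congr_ae (Filter.Eventually.of_forall fun p => hpt p)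
      _ = _ := integral_add (((integrable_const x).sub hintY).integrableOn)
          (hintYm'.integrableOn)
  -- comparison using the supermartingale inequality
  have hsub : ∫ p in A, (x - (p : ℝ × ℝ).1) ∂π ≤ ∫ p in A, (x - (p : ℝ × ℝ).2) ∂π := by
    rw [integral_sub (integrable_const x).integrableOn hintX.integrableOn,
      integral_sub (integrable_const x).integrableOn hintY.integrableOn]
    linarith [hkey]
  have hR1nn : 0 ≤ ∫ p in A, max ((p : ℝ × ℝ).2 - x) 0 ∂π :=
    setIntegral_nonneg hmA fun p _ => le_max_right _ _
  have hR2nn : 0 ≤ ∫ p in Aᶜ, max (x - (p : ℝ × ℝ).2) 0 ∂π :=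
    setIntegral_nonneg hmA.compl fun p _ => le_max_right _ _
  have hR1 : ∫ p in A, max ((p : ℝ × ℝ).2 - x) 0 ∂π = 0 := by
    have : Ppot η x ≥ Ppot χ x := le_of_eq hx.symm
    rw [hηA, hχA] at this
    linarith
  have hR2 : ∫ p in Aᶜ, max (x - (p : ℝ × ℝ).2) 0 ∂π = 0 := by
    have : Ppot η x ≥ Ppot χ x := le_of_eq hx.symm
    rw [hηA, hχA] at this
    linarith
  -- from zero integrals to null sets
  have hae1 : (fun p : ℝ × ℝ => max (p.2 - x) 0) =ᵐ[π.restrict A] 0 :=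
    (integral_eq_zero_iff_of_nonneg (fun p => le_max_right _ _)
      hintYm'.integrableOn).mp hR1
  have hae2 : (fun p : ℝ × ℝ => max (x - p.2) 0) =ᵐ[π.restrict Aᶜ] 0 :=
    (integral_eq_zero_iff_of_nonneg (fun p => le_max_right _ _)
      hintYm.integrableOn).mp hR2
  have hnull1 : π.restrict A {p : ℝ × ℝ | max (p.2 - x) 0 ≠ 0} = 0 := by
    have := hae1
    rw [Filter.EventuallyEq, ae_iff] at this
    simpa using this
  have hnull2 : π.restrict Aᶜ {p : ℝ × ℝ | max (x - p.2) 0 ≠ 0} = 0 := by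
    have := hae2
    rw [Filter.EventuallyEq, ae_iff] at this
    simpa using this
  have hm1 : MeasurableSet (Set.Iio x ×ˢ Set.Ioi x) := measurableSet_Iio.prod measurableSet_Ioi
  have hm2 : MeasurableSet (Set.Ioi x ×ˢ Set.Iio x) := measurableSet_Ioi.prod measurableSet_Iio
  have hz1 : π (Set.Iio x ×ˢ Set.Ioi x) = 0 := by
    have hsub1 : Set.Iio x ×ˢ Set.Ioi x ⊆ {p : ℝ × ℝ | max (p.2 - x) 0 ≠ 0} := by
      intro p hp
      have : x < p.2 := hp.2
      simp only [Set.mem_setOf_eq, max_eq_left (sub_nonneg.mpr this.le)]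
      exact ne_of_gt (sub_pos.mpr this)
    have h := measure_mono_null hsub1 hnull1
    rw [Measure.restrict_apply hm1] at h
    have : Set.Iio x ×ˢ Set.Ioi x ∩ A = Set.Iio x ×ˢ Set.Ioi x := by
      rw [hA, Set.prod_inter_prod]
      simp
    rwa [this] at h
  have hz2 : π (Set.Ioi x ×ˢ Set.Iio x) = 0 := by
    have hsub2 : Set.Ioi x ×ˢ Set.Iio x ⊆ {p : ℝ × ℝ | max (x - p.2) 0 ≠ 0} := by
      intro p hp
      have : p.2 < x := hp.2
      simp only [Set.mem_setOf_eq, max_eq_left (sub_nonneg.mpr this.le)]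
      exact ne_of_gt (sub_pos.mpr this)
    have h := measure_mono_null hsub2 hnull2
    rw [Measure.restrict_apply hm2] at h
    have hsubc : Set.Ioi x ×ˢ Set.Iio x ⊆ Aᶜ := by
      intro p hp hpA
      exact absurd (a := p.1 < x) hpA.1 (not_lt.mpr (show x < p.1 from hp.1).le)
    rwa [Set.inter_eq_left.mpr hsubc] at h
  rw [hz1, hz2, add_zero]
end
end

section
/- Let f : ℝ → ℝ be lower semicontinuous and let h : ℝ → ℝ be the convex hull of f. If a < b and f(y) > h(y) for all y ∈ (a,b), then h is affine on (a,b); that is, there exist m, c ∈ ℝ with h(y) = m·y + c for all y ∈ (a,b). -/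
open MeasureTheory Set Filter

noncomputable section

lemma affine_convexOn (m c : ℝ) : ConvexOn ℝ Set.univ (fun t => m * t + c) := by
  refine ⟨convex_univ, fun x _ y _ u v hu hv huv => ?_⟩
  simp only [smul_eq_mul]
  apply le_of_eq
  linear_combination c * huv.symm

lemma chord_le {h : ℝ → ℝ} (hc : ConvexOn ℝ Set.univ h) {x1 x3 t : ℝ}
    (h1 : x1 ≤ t) (h3 : t ≤ x3) (h13 : x1 < x3) :
    h t ≤ h x1 + (h x3 - h x1) / (x3 - x1) * (t - x1) := by
  have hd : (0:ℝ) < x3 - x1 := by linarith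
  set u := (x3 - t) / (x3 - x1) with hu_def
  set v := (t - x1) / (x3 - x1) with hv_def
  have hu : 0 ≤ u := div_nonneg (by linarith) hd.le
  have hv : 0 ≤ v := div_nonneg (by linarith) hd.le
  have huv : u + v = 1 := by
    rw [hu_def, hv_def, ← add_div, div_eq_one_iff_eq hd.ne']; ring
  have ht : u • x1 + v • x3 = t := by
    simp only [smul_eq_mul, hu_def, hv_def]; field_simp; ring
  have key := hc.2 (mem_univ x1) (mem_univ x3) hu hv huv
  rw [ht] at key
  refine key.trans (le_of_eq ?_)
  simp only [smul_eq_mul, hu_def, hv_def]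
  field_simp
  ring

lemma chord_ge {h : ℝ → ℝ} (hc : ConvexOn ℝ Set.univ h) {x1 x3 t : ℝ}
    (h13 : x1 < x3) (ht : t ≤ x1 ∨ x3 ≤ t) :
    h x1 + (h x3 - h x1) / (x3 - x1) * (t - x1) ≤ h t := by
  have hd : (0:ℝ) < x3 - x1 := by linarith
  rcases ht with ht | ht
  · rcases eq_or_lt_of_le ht with rfl | ht
    · simp
    · have key := hc.slope_mono_adjacent (mem_univ t) (mem_univ x3) ht h13
      have e : (h x3 - h x1) / (x3 - x1) * (t - x1) ≤ h t - h x1 := by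
        rw [div_le_div_iff₀ (by linarith : (0:ℝ) < x1 - t) hd] at key
        rw [div_mul_eq_mul_div, div_le_iff₀ hd]
        nlinarith [key]
      linarith
  · rcases eq_or_lt_of_le ht with rfl | ht
    · have e : (h x3 - h x1) / (x3 - x1) * (x3 - x1) = h x3 - h x1 := by field_simp
      linarith
    · have key := hc.slope_mono_adjacent (mem_univ x1) (mem_univ t) h13 ht
      have e2 : (h x3 - h x1) / (x3 - x1) * (t - x3) ≤ h t - h x3 := by
        rw [div_mul_eq_mul_div, div_le_iff₀ hd]
        rw [div_le_div_iff₀ hd (by linarith : (0:ℝ) < t - x3)] at key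
        nlinarith [key]
      have e1 : (h x3 - h x1) / (x3 - x1) * (x3 - x1) = h x3 - h x1 := by field_simp
      have e3 : (h x3 - h x1) / (x3 - x1) * (t - x1) = (h x3 - h x1) / (x3 - x1) * (x3 - x1) + (h x3 - h x1) / (x3 - x1) * (t - x3) := by ring
      linarith

lemma gap_lemma {f h : ℝ → ℝ} (hf : LowerSemicontinuous f) (hh : Continuous h)
    {K : Set ℝ} (hK : IsCompact K) (hpos : ∀ x ∈ K, h x < f x) :
    ∃ δ > 0, ∀ x ∈ K, h x + δ ≤ f x := by
  have hg : LowerSemicontinuous (fun x => f x + (-h x)) :=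
    hf.add (hh.neg.lowerSemicontinuous)
  set U : ℕ → Set ℝ := fun n => (fun x => f x + (-h x)) ⁻¹' Set.Ioi (((n:ℝ)+1)⁻¹) with hU_def
  have hUopen : ∀ n, IsOpen (U n) := fun n => hg.isOpen_preimage _
  have hUmono : ∀ {n m : ℕ}, n ≤ m → U n ⊆ U m := by
    intro n m hnm x hx
    simp only [hU_def, Set.mem_preimage, Set.mem_Ioi] at hx ⊢
    have : ((m:ℝ)+1)⁻¹ ≤ ((n:ℝ)+1)⁻¹ := by
      apply inv_anti₀ (by positivity)
      have : (n:ℝ) ≤ (m:ℝ) := Nat.cast_le.mpr hnm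
      linarith
    linarith
  have hcover : K ⊆ ⋃ n, U n := by
    intro x hx
    obtain ⟨n, hn⟩ := exists_nat_one_div_lt (show (0:ℝ) < f x - h x by linarith [hpos x hx])
    refine Set.mem_iUnion.2 ⟨n, ?_⟩
    simp only [hU_def, Set.mem_preimage, Set.mem_Ioi]
    rw [one_div] at hn
    linarith
  obtain ⟨n, hn⟩ := hK.elim_directed_cover U hUopen hcover
    (fun n m => ⟨max n m, hUmono (le_max_left n m), hUmono (le_max_right n m)⟩)
  refine ⟨((n:ℝ)+1)⁻¹, by positivity, fun x hx => ?_⟩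
  have := hn hx
  simp only [hU_def, Set.mem_preimage, Set.mem_Ioi] at this
  linarith

lemma key_lemma {f h : ℝ → ℝ} (hf : LowerSemicontinuous f) (hh : IsConvexHullFn f h)
    {a b : ℝ} (hgt : ∀ y ∈ Set.Ioo a b, h y < f y)
    {x1 x2 x3 : ℝ} (hx1 : x1 ∈ Set.Ioo a b) (hx3 : x3 ∈ Set.Ioo a b)
    (h12 : x1 < x2) (h23 : x2 < x3)
    (hstrict : h x2 < h x1 + (h x3 - h x1) / (x3 - x1) * (x2 - x1)) : False := by
  obtain ⟨hconv, hle, hmax⟩ := hh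
  have hcont : Continuous h := by
    rw [← continuousOn_univ]
    exact hconv.continuousOn isOpen_univ
  have h13 : x1 < x3 := h12.trans h23
  set s := (h x3 - h x1) / (x3 - x1) with hs_def
  set L : ℝ → ℝ := fun t => h x1 + s * (t - x1) with hL_def
  set φ : ℝ → ℝ := fun t => L t - h t with hφ_def
  have hφcont : Continuous φ := by fun_prop
  have hKsub : Set.Icc x1 x3 ⊆ Set.Ioo a b := fun t ht =>
    ⟨lt_of_lt_of_le hx1.1 ht.1, lt_of_le_of_lt ht.2 hx3.2⟩
  obtain ⟨xs, hxsK, hxsmax⟩ := isCompact_Icc.exists_isMaxOn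
    ⟨x2, h12.le, h23.le⟩ hφcont.continuousOn
  set D := φ xs with hD_def
  have hDpos : 0 < D := lt_of_lt_of_le (by simp only [hφ_def, hL_def]; linarith)
    (hxsmax ⟨h12.le, h23.le⟩)
  obtain ⟨δ0, hδ0, hgap⟩ := gap_lemma hf hcont isCompact_Icc
    (fun x hx => hgt x (hKsub hx))
  set δ := min D δ0 with hδ_def
  have hδpos : 0 < δ := lt_min hDpos hδ0
  set g : ℝ → ℝ := fun t => max (h t) (L t - D + δ) with hg_def
  have hgconv : ConvexOn ℝ Set.univ g := by
    have haff : ConvexOn ℝ Set.univ (fun t => L t - D + δ) := by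
      have := affine_convexOn s (h x1 - s * x1 - D + δ)
      convert this using 2 with t
      simp only [hL_def]; ring
    have h2 := hconv.sup haff
    have : g = h ⊔ (fun t => L t - D + δ) := by
      funext t; simp [hg_def, Pi.sup_apply]
    rw [this]; exact h2
  have hgle : ∀ t, g t ≤ f t := by
    intro t
    by_cases htK : t ∈ Set.Icc x1 x3
    · apply max_le (hle t)
      have h1 : φ t ≤ D := hxsmax htK
      have h2 : h t + δ0 ≤ f t := hgap t htK
      have h3 : δ ≤ δ0 := min_le_right _ _
      simp only [hφ_def, hL_def] at h1
      simp only [hL_def]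
      linarith
    · have hout : t ≤ x1 ∨ x3 ≤ t := by
        rcases lt_or_ge t x1 with ht | ht
        · exact Or.inl ht.le
        · exact Or.inr (le_of_not_gt fun hc => htK ⟨ht, hc.le⟩)
      have hLt : L t ≤ h t := chord_ge hconv h13 hout
      have hδD : δ ≤ D := min_le_left _ _
      exact max_le (hle t) (by linarith [hle t])
  have hcontra := hmax g hgconv hgle xs
  have : L xs - D + δ ≤ g xs := le_max_right _ _
  have hφxs : L xs - h xs = D := rfl
  linarith

/-- Lemma 2.6: if `f` is lower semicontinuous and `f > f^c` on `(a,b)`, then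
the convex hull `f^c` is affine on `(a,b)`. -/
theorem convexHull_affine_where_strictly_below
    (f h : ℝ → ℝ) (hf : LowerSemicontinuous f) (hh : IsConvexHullFn f h)
    (a b : ℝ) (hab : a < b) (hgt : ∀ y ∈ Set.Ioo a b, h y < f y) :
    ∃ m c : ℝ, ∀ y ∈ Set.Ioo a b, h y = m * y + c := by
  by_contra hcon
  push_neg at hcon
  set p := a + (b - a) / 3 with hp_def
  set q := a + 2 * (b - a) / 3 with hq_def
  have hp : p ∈ Set.Ioo a b := ⟨by simp [hp_def]; linarith, by simp [hp_def]; linarith⟩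
  have hq : q ∈ Set.Ioo a b := ⟨by simp [hq_def]; linarith, by simp [hq_def]; linarith⟩
  have hpq : p < q := by simp [hp_def, hq_def]; linarith
  clear_value p q
  set m := (h q - h p) / (q - p) with hm_def
  set c := h p - m * p with hc_def
  obtain ⟨y, hy, hne⟩ := hcon m c
  have hqp : q - p ≠ 0 := by linarith
  have hmcp : m * p + c = h p := by simp only [hc_def]; ring
  have hmcq : m * q + c = h q := by
    simp only [hc_def, hm_def]
    field_simp
    ring
  rcases lt_trichotomy y p with hyp | hyp | hyp
  · -- y < p : triple (y, p, q)
    have hch := chord_le hh.1 hyp.le hpq.le (hyp.trans hpq) (t := p) (x1 := y) (x3 := q)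
    rcases lt_or_eq_of_le hch with hlt | heq
    · exact key_lemma hf hh hgt hy hq hyp hpq hlt
    · apply hne
      have hqy : q - y ≠ 0 := by linarith [hyp.trans hpq]
      field_simp [hm_def, hc_def] at heq
      rw [hc_def, hm_def]
      apply mul_right_cancel₀ hqp
      linear_combination -heq - (y - p) * (div_mul_cancel₀ (h q - h p) hqp)
  · exact hne (by rw [hyp]; exact hmcp.symm)
  · rcases lt_trichotomy y q with hyq | hyq | hyq
    · -- p < y < q : triple (p, y, q)
      have hch := chord_le hh.1 hyp.le hyq.le hpq (t := y) (x1 := p) (x3 := q)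
      have : h p + (h q - h p) / (q - p) * (y - p) = m * y + c := by
        simp only [hm_def, hc_def]; ring
      rw [this] at hch
      rcases lt_or_eq_of_le hch with hlt | heq
      · refine key_lemma hf hh hgt hp hq hyp hyq ?_
        rw [show h p + (h q - h p) / (q - p) * (y - p) = m * y + c from by
          simp only [hm_def, hc_def]; ring]
        exact hlt
      · exact hne heq
    · exact hne (by rw [hyq]; exact hmcq.symm)
    · -- q < y : triple (p, q, y)
      have hch := chord_le hh.1 hpq.le hyq.le (hpq.trans hyq) (t := q) (x1 := p) (x3 := y)
      rcases lt_or_eq_of_le hch with hlt | heq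
      · exact key_lemma hf hh hgt hp hy hpq hyq hlt
      · apply hne
        have hyp' : y - p ≠ 0 := by linarith
        field_simp [hm_def, hc_def] at heq
        rw [hc_def, hm_def]
        apply mul_right_cancel₀ hqp
        linear_combination -heq - (y - p) * (div_mul_cancel₀ (h q - h p) hqp)
end
end

section
/- Let f, g : ℝ → ℝ be convex and suppose h : ℝ → ℝ is the convex hull of g − f. Then the function g − h is convex on ℝ. -/
open MeasureTheory Set Filter

noncomputable section

private lemma chord_le' {F : ℝ → ℝ} (hF : ConvexOn ℝ Set.univ F) {p q z : ℝ}
    (hpq : p < q) (h1 : p ≤ z) (h2 : z ≤ q) :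
    F z * (q - p) ≤ (q - z) * F p + (z - p) * F q := by
  have hd : (0:ℝ) < q - p := by linarith
  have h := hF.2 (Set.mem_univ p) (Set.mem_univ q)
    (div_nonneg (by linarith : (0:ℝ) ≤ q - z) hd.le)
    (div_nonneg (by linarith : (0:ℝ) ≤ z - p) hd.le)
    (by field_simp; ring)
  simp only [smul_eq_mul] at h
  have hz : (q - z) / (q - p) * p + (z - p) / (q - p) * q = z := by
    field_simp; ring
  rw [hz] at h
  rw [div_mul_eq_mul_div, div_mul_eq_mul_div, ← add_div, le_div_iff₀ hd] at h
  linarith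

set_option maxHeartbeats 1000000 in
private lemma key_ineq (f g h : ℝ → ℝ) (hf : ConvexOn ℝ Set.univ f)
    (hg : ConvexOn ℝ Set.univ g)
    (hh : IsConvexHullFn (fun x => g x - f x) h) {a b s t : ℝ}
    (hab : a < b) (hs : 0 ≤ s) (ht : 0 ≤ t) (hst : s + t = 1) :
    g (s * a + t * b) - h (s * a + t * b) ≤ s * (g a - h a) + t * (g b - h b) := by
  obtain ⟨hhconv, hhle, hhmax⟩ := hh
  have hhle' : ∀ x, h x ≤ g x - f x := hhle
  have hd : (0:ℝ) < b - a := by linarith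
  set ℓ : ℝ → ℝ := fun z =>
    ((b - z) * (g a - h a) + (z - a) * (g b - h b)) / (b - a) with hℓ
  set ψ : ℝ → ℝ := fun z => g z - ℓ z with hψ
  have hψa : ψ a = h a := by
    simp only [hψ, hℓ]; field_simp; ring
  have hψb : ψ b = h b := by
    simp only [hψ, hℓ]; field_simp; ring
  have hℓaff : ∀ p q u v : ℝ, u + v = 1 → ℓ (u * p + v * q) = u * ℓ p + v * ℓ q := by
    intro p q u v huv
    simp only [hℓ]
    rw [mul_div_assoc', mul_div_assoc', ← add_div, div_eq_div_iff hd.ne' hd.ne']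
    linear_combination ((g b - h b) * a - (g a - h a) * b) * (b - a) * huv
  have hψconv : ConvexOn ℝ Set.univ ψ := by
    refine ⟨convex_univ, ?_⟩
    intro p _ q _ u v hu hv huv
    simp only [smul_eq_mul, hψ]
    have h1 := hg.2 (Set.mem_univ p) (Set.mem_univ q) hu hv huv
    simp only [smul_eq_mul] at h1
    have h2 := hℓaff p q u v huv
    linarith
  set Φ : ℝ → ℝ := fun z => if a ≤ z ∧ z ≤ b then max (h z) (ψ z) else h z with hΦ
  have hΦh : ∀ z, h z ≤ Φ z := by
    intro z; simp only [hΦ]; split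
    · exact le_max_left _ _
    · exact le_refl _
  have hΦψ : ∀ z, a ≤ z → z ≤ b → ψ z ≤ Φ z := by
    intro z h1 h2; simp only [hΦ, if_pos (And.intro h1 h2)]; exact le_max_right _ _
  have hΦle : ∀ z, Φ z ≤ g z - f z := by
    intro z
    simp only [hΦ]
    split
    · next hz =>
      refine max_le (hhle' z) ?_
      have hch := chord_le' hf hab hz.1 hz.2
      have h1 : f a ≤ g a - h a := by linarith [hhle' a]
      have h2 : f b ≤ g b - h b := by linarith [hhle' b]
      have hfl : f z ≤ ℓ z := by
        simp only [hℓ]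
        rw [le_div_iff₀ hd]
        nlinarith [mul_le_mul_of_nonneg_left h1 (by linarith : (0:ℝ) ≤ b - z),
                   mul_le_mul_of_nonneg_left h2 (by linarith : (0:ℝ) ≤ z - a)]
      simp only [hψ]; linarith
    · exact hhle' _
  -- the core two-point inequality for ψ against Φ-chords
  have core : ∀ p q u v : ℝ, p < q → 0 < u → 0 < v → u + v = 1 →
      a ≤ u * p + v * q → u * p + v * q ≤ b →
      ψ (u * p + v * q) ≤ u * Φ p + v * Φ q := by
    intro p q u v hpq hu hv huv hza hzb
    set z := u * p + v * q with hzdef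
    have hdq : (0:ℝ) < q - p := by linarith
    have hzp : z - p = v * (q - p) := by rw [hzdef]; linear_combination p * huv
    have hqz : q - z = u * (q - p) := by rw [hzdef]; linear_combination (-q) * huv
    have hpz : p < z := by nlinarith [mul_pos hv hdq]
    have hzq : z < q := by nlinarith [mul_pos hu hdq]
    set c : ℝ → ℝ := fun w => ((q - w) * Φ p + (w - p) * Φ q) / (q - p) with hc
    have hcz : c z = u * Φ p + v * Φ q := by
      simp only [hc]
      rw [div_eq_iff hdq.ne']
      rw [hzdef]
      linear_combination (Φ q * p - Φ p * q) * huv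
    set p' := max p a with hp'
    set q' := min q b with hq'
    have hp'z : p' ≤ z := max_le hpz.le hza
    have hzq' : z ≤ q' := le_min hzq.le hzb
    have hcp' : ψ p' ≤ c p' := by
      rcases le_or_gt a p with hap | hap
      · have hpp : p' = p := max_eq_left hap
        rw [hpp]
        have hψp : ψ p ≤ Φ p := hΦψ p hap (by linarith)
        have hcp : c p = Φ p := by
          simp only [hc]; rw [div_eq_iff hdq.ne']; ring
        linarith
      · have hp'a : p' = a := max_eq_right hap.le
        rw [hp'a, hψa]
        have hch := chord_le' hhconv hpq hap.le (by linarith : a ≤ q)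
        simp only [hc]
        rw [le_div_iff₀ hdq]
        nlinarith [mul_le_mul_of_nonneg_left (hΦh p) (by linarith : (0:ℝ) ≤ q - a),
                   mul_le_mul_of_nonneg_left (hΦh q) (by linarith : (0:ℝ) ≤ a - p)]
    have hcq' : ψ q' ≤ c q' := by
      rcases le_or_gt q b with hqb | hqb
      · have hqq : q' = q := min_eq_left hqb
        rw [hqq]
        have hψq : ψ q ≤ Φ q := hΦψ q (by linarith) hqb
        have hcq : c q = Φ q := by
          simp only [hc]; rw [div_eq_iff hdq.ne']; ring
        linarith
      · have hq'b : q' = b := min_eq_right hqb.le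
        rw [hq'b, hψb]
        have hch := chord_le' hhconv hpq (by linarith : p ≤ b) hqb.le
        simp only [hc]
        rw [le_div_iff₀ hdq]
        nlinarith [mul_le_mul_of_nonneg_left (hΦh p) (by linarith : (0:ℝ) ≤ q - b),
                   mul_le_mul_of_nonneg_left (hΦh q) (by linarith : (0:ℝ) ≤ b - p)]
    have hψz : ψ z ≤ c z := by
      rcases lt_or_ge p' q' with hpq' | hqp'
      · have hch := chord_le' hψconv hpq' hp'z hzq'
        have hd' : (0:ℝ) < q' - p' := by linarith
        have hcaff : (q' - z) * c p' + (z - p') * c q' = (q' - p') * c z := by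
          simp only [hc]; field_simp; ring
        have h1 : (q' - z) * ψ p' ≤ (q' - z) * c p' :=
          mul_le_mul_of_nonneg_left hcp' (by linarith)
        have h2 : (z - p') * ψ q' ≤ (z - p') * c q' :=
          mul_le_mul_of_nonneg_left hcq' (by linarith)
        nlinarith
      · have hzz : z = p' := le_antisymm (le_trans hzq' hqp') hp'z
        rw [hzz]
        exact hcp'
    linarith
  have hΦconv : ConvexOn ℝ Set.univ Φ := by
    refine ⟨convex_univ, ?_⟩
    intro p _ q _ u v hu hv huv
    simp only [smul_eq_mul]
    have hhb : h (u * p + v * q) ≤ u * Φ p + v * Φ q := by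
      have h1 := hhconv.2 (Set.mem_univ p) (Set.mem_univ q) hu hv huv
      simp only [smul_eq_mul] at h1
      have h2 := mul_le_mul_of_nonneg_left (hΦh p) hu
      have h3 := mul_le_mul_of_nonneg_left (hΦh q) hv
      linarith
    by_cases hz : a ≤ u * p + v * q ∧ u * p + v * q ≤ b
    · have hΦz : Φ (u * p + v * q) = max (h (u * p + v * q)) (ψ (u * p + v * q)) := by
        simp only [hΦ, if_pos hz]
      rw [hΦz]
      refine max_le hhb ?_
      rcases eq_or_lt_of_le hu with hu0 | hu0
      · have hv1 : v = 1 := by linarith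
        rw [← hu0, hv1] at hz ⊢
        simp only [zero_mul, one_mul, zero_add] at hz ⊢
        linarith [hΦψ q hz.1 hz.2]
      rcases eq_or_lt_of_le hv with hv0 | hv0
      · have hu1 : u = 1 := by linarith
        rw [← hv0, hu1] at hz ⊢
        simp only [zero_mul, one_mul, add_zero] at hz ⊢
        linarith [hΦψ p hz.1 hz.2]
      rcases lt_trichotomy p q with hpq | hpq | hpq
      · exact core p q u v hpq hu0 hv0 huv hz.1 hz.2
      · subst hpq
        have hzz : u * p + v * p = p := by linear_combination p * huv
        rw [hzz] at hz ⊢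
        have h5 : u * Φ p + v * Φ p = Φ p := by linear_combination Φ p * huv
        linarith [hΦψ p hz.1 hz.2]
      · have h1 := core q p v u hpq hv0 hu0 (by linarith)
          (by linarith [hz.1] : a ≤ v * q + u * p)
          (by linarith [hz.2] : v * q + u * p ≤ b)
        have h2 : v * q + u * p = u * p + v * q := by ring
        rw [h2] at h1
        linarith
    · have hΦz : Φ (u * p + v * q) = h (u * p + v * q) := by
        simp only [hΦ, if_neg hz]
      rw [hΦz]
      exact hhb
  have hΦleh : ∀ z, Φ z ≤ h z := hhmax Φ hΦconv hΦle
  set x := s * a + t * b with hx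
  have hxa : x - a = t * (b - a) := by rw [hx]; linear_combination a * hst
  have hbx : b - x = s * (b - a) := by rw [hx]; linear_combination (-b) * hst
  have hax : a ≤ x := by nlinarith [mul_nonneg ht hd.le]
  have hxb : x ≤ b := by nlinarith [mul_nonneg hs hd.le]
  have h1 : ψ x ≤ Φ x := hΦψ x hax hxb
  have h2 : Φ x ≤ h x := hΦleh x
  have h3 : ℓ x = s * (g a - h a) + t * (g b - h b) := by
    simp only [hℓ]
    rw [div_eq_iff hd.ne', hx]
    linear_combination ((g b - h b) * a - (g a - h a) * b) * hst
  have h4 : ψ x = g x - ℓ x := by simp only [hψ]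
  linarith

/-- Lemma 2.8: if `f, g` are convex and `h = (g - f)^c`, then `g - h` is convex. -/
theorem convex_sub_convexHull
    (f g h : ℝ → ℝ) (hf : ConvexOn ℝ Set.univ f) (hg : ConvexOn ℝ Set.univ g)
    (hh : IsConvexHullFn (fun x => g x - f x) h) :
    ConvexOn ℝ Set.univ (fun x => g x - h x) := by
  refine ⟨convex_univ, ?_⟩
  intro a _ b _ s t hs ht hst
  simp only [smul_eq_mul]
  rcases lt_trichotomy a b with hab | rfl | hab
  · exact key_ineq f g h hf hg hh hab hs ht hst
  · have hx : s * a + t * a = a := by linear_combination a * hst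
    rw [hx]
    have : s * (g a - h a) + t * (g a - h a) = g a - h a := by
      linear_combination (g a - h a) * hst
    linarith
  · have h1 := key_ineq f g h hf hg hh hab ht hs (by linarith)
    have h2 : t * b + s * a = s * a + t * b := by ring
    rw [h2] at h1
    linarith
end
end

section
/- Let f : ℝ → ℝ be any function and let g : ℝ → ℝ be convex. Suppose h₁ : ℝ → ℝ is the convex hull of f, h₂ : ℝ → ℝ is the convex hull of f − g, and h₃ : ℝ → ℝ is the convex hull of h₁ − g. Then h₂ = h₃. -/
open MeasureTheory Set Filter

noncomputable section

/-- Lemma 2.9: `(f - g)^c = (f^c - g)^c` for `g` convex. -/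
theorem convexHull_sub_convex_eq
    (f g h₁ h₂ h₃ : ℝ → ℝ) (hg : ConvexOn ℝ Set.univ g)
    (hh₁ : IsConvexHullFn f h₁)
    (hh₂ : IsConvexHullFn (fun x => f x - g x) h₂)
    (hh₃ : IsConvexHullFn (fun x => h₁ x - g x) h₃) :
    h₂ = h₃ := by
  funext x
  apply le_antisymm
  · refine hh₃.2.2 h₂ hh₂.1 (fun y => ?_) x
    have := hh₁.2.2 (fun z => h₂ z + g z) (hh₂.1.add hg)
      (fun z => by have := hh₂.2.1 z; simp only at this ⊢; linarith) y
    simp only at this ⊢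
    linarith
  · refine hh₂.2.2 h₃ hh₃.1 (fun y => ?_) x
    have h3 := hh₃.2.1 y
    have h1 := hh₁.2.1 y
    simp only at h3 ⊢
    linarith
end
end

section
/- Let α, a ≥ 0 and β, b ∈ ℝ, and let f ∈ 𝒟(α,β) and g ∈ 𝒟(a,b) with g(k) ≥ f(k) for all k ∈ ℝ. Then: (i) α ≤ a; (ii) if α = a then β ≥ b; (iii) the quantity η = sup_{k∈ℝ} ( (a−α)k − (b−β) − g(k) + f(k) ) satisfies 0 ≤ η < ∞; and (iv) if h : ℝ → ℝ is the convex hull of g − f, then h ∈ 𝒟(a−α, b−β+η). -/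
open MeasureTheory Set Filter

noncomputable section

private lemma affineConvexOn (c e : ℝ) :
    ConvexOn ℝ (Set.univ : Set ℝ) (fun x : ℝ => c * x + e) := by
  refine ⟨convex_univ, fun x _ y _ p q hp hq hpq => ?_⟩
  simp only [smul_eq_mul]
  have : p * (c * x + e) + q * (c * y + e) = c * (p * x + q * y) + e := by
    linear_combination e * hpq
  linarith

private lemma convex_blowup_top {ψ : ℝ → ℝ} (hψ : ConvexOn ℝ Set.univ ψ)
    {x y : ℝ} (hxy : x < y) (hlt : ψ x < ψ y) : Filter.Tendsto ψ Filter.atTop Filter.atTop := by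
  set s := (ψ y - ψ x) / (y - x) with hs_def
  have hs : 0 < s := div_pos (by linarith) (by linarith)
  have key : ∀ w, y < w → ψ y + s * (w - y) ≤ ψ w := by
    intro w hw
    have h1 := hψ.slope_mono_adjacent (Set.mem_univ x) (Set.mem_univ w) hxy hw
    rw [← hs_def] at h1
    have h2 : s * (w - y) ≤ ψ w - ψ y := (le_div_iff₀ (by linarith : (0:ℝ) < w - y)).mp h1
    linarith
  have hlin : Filter.Tendsto (fun w : ℝ => ψ y + s * (w - y)) Filter.atTop Filter.atTop := by
    have : Filter.Tendsto (fun w : ℝ => s * w + (ψ y - s * y)) Filter.atTop Filter.atTop :=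
      Filter.tendsto_atTop_add_const_right _ _ (Filter.Tendsto.const_mul_atTop hs tendsto_id)
    exact this.congr (fun w => by ring)
  refine Filter.tendsto_atTop_mono' Filter.atTop ?_ hlin
  filter_upwards [Filter.eventually_gt_atTop y] with w hw
  exact key w hw

private lemma convex_blowup_bot {ψ : ℝ → ℝ} (hψ : ConvexOn ℝ Set.univ ψ)
    {x y : ℝ} (hxy : x < y) (hlt : ψ y < ψ x) : Filter.Tendsto ψ Filter.atBot Filter.atTop := by
  set s := (ψ y - ψ x) / (y - x) with hs_def
  have hs : s < 0 := div_neg_of_neg_of_pos (by linarith) (by linarith)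
  have key : ∀ z, z < x → ψ x + s * (z - x) ≤ ψ z := by
    intro z hz
    have h1 := hψ.slope_mono_adjacent (Set.mem_univ z) (Set.mem_univ y) hz hxy
    rw [← hs_def] at h1
    have h2 : ψ x - ψ z ≤ s * (x - z) := (div_le_iff₀ (by linarith : (0:ℝ) < x - z)).mp h1
    have h3 : s * (z - x) = -(s * (x - z)) := by ring
    linarith
  have hlin : Filter.Tendsto (fun z : ℝ => ψ x + s * (z - x)) Filter.atBot Filter.atTop := by
    have h1 : Filter.Tendsto (fun w : ℝ => (-s) * w + (ψ x - s * x)) Filter.atTop Filter.atTop :=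
      Filter.tendsto_atTop_add_const_right _ _
        (Filter.Tendsto.const_mul_atTop (neg_pos.2 hs) tendsto_id)
    have h2 := h1.comp tendsto_neg_atBot_atTop
    exact h2.congr (fun z => by simp [Function.comp]; ring)
  refine Filter.tendsto_atTop_mono' Filter.atBot ?_ hlin
  filter_upwards [Filter.eventually_lt_atBot x] with z hz
  exact key z hz

private lemma monotone_of_convex_tendsto_atBot {ψ : ℝ → ℝ} (hψ : ConvexOn ℝ Set.univ ψ)
    {c : ℝ} (hb : Filter.Tendsto ψ Filter.atBot (nhds c)) : Monotone ψ := by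
  intro x y hxy
  rcases eq_or_lt_of_le hxy with rfl | hxy
  · exact le_rfl
  by_contra hlt
  push_neg at hlt
  exact not_tendsto_atTop_of_tendsto_nhds hb (convex_blowup_bot hψ hxy hlt)

/-- Lemma 2.10: behaviour of the convex hull of a difference of functions in
the classes `𝒟(α,β)` and `𝒟(a,b)`. -/
theorem convexHull_memD
    (α a β b : ℝ) (hα : 0 ≤ α) (ha : 0 ≤ a)
    (f g : ℝ → ℝ) (hf : MemD α β f) (hg : MemD a b g)
    (hge : ∀ k : ℝ, f k ≤ g k)
    (h : ℝ → ℝ) (hh : IsConvexHullFn (fun k => g k - f k) h) :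
    α ≤ a ∧ (α = a → b ≤ β) ∧
    ∃ η : ℝ, 0 ≤ η ∧
      IsLUB (Set.range fun k : ℝ => (a - α) * k - (b - β) - g k + f k) η ∧
      MemD (a - α) (b - β + η) h := by
  obtain ⟨hf0, hfmono, hfconv, hfbot, hftop⟩ := hf
  obtain ⟨hg0, hgmono, hgconv, hgbot, hgtop⟩ := hg
  obtain ⟨hhconv, hhle, hhmax⟩ := hh
  set φ : ℝ → ℝ := fun k : ℝ => (a - α) * k - (b - β) - g k + f k with hφdef
  have hd0 : ∀ k, 0 ≤ g k - f k := fun k => sub_nonneg.2 (hge k)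
  have hφtop : Tendsto φ atTop (nhds 0) := by
    have h1 := hftop.sub hgtop
    rw [sub_zero] at h1
    exact h1.congr (fun k => by simp only [hφdef]; ring)
  have hdbot : Tendsto (fun k => g k - f k) atBot (nhds 0) := by
    have h1 := hgbot.sub hfbot; rwa [sub_zero] at h1
  have hφleL : ∀ k, φ k ≤ (a - α) * k - (b - β) := by
    intro k; have := hd0 k; simp only [hφdef]; linarith
  have hαa : α ≤ a := by
    by_contra hcon
    push_neg at hcon
    have hL : Tendsto (fun k : ℝ => (a - α) * k - (b - β)) atTop atBot := by
      have h1 : Tendsto (fun k : ℝ => (α - a) * k + (b - β)) atTop atTop :=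
        tendsto_atTop_add_const_right _ _
          (Tendsto.const_mul_atTop (by linarith) tendsto_id)
      exact (tendsto_neg_atTop_atBot.comp h1).congr (fun k => by simp [Function.comp]; ring)
    exact not_tendsto_atBot_of_tendsto_nhds hφtop (tendsto_atBot_mono hφleL hL)
  have hab : α = a → b ≤ β := by
    intro hEq
    have hdtop : Tendsto (fun k => g k - f k) atTop (nhds (β - b)) := by
      have h1 := hgtop.sub hftop
      rw [sub_zero] at h1
      have h2 := h1.sub_const (b - β)
      rw [zero_sub, neg_sub] at h2
      exact h2.congr (fun k => by rw [← hEq]; ring)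
    have h3 : (0:ℝ) ≤ β - b := ge_of_tendsto' hdtop (fun k => hd0 k)
    linarith
  have hbdd : BddAbove (Set.range φ) := by
    obtain ⟨N, hN⟩ := Filter.eventually_atTop.1
      (hφtop.eventually (eventually_le_nhds (by norm_num : (0:ℝ) < 1)))
    refine ⟨max ((a - α) * N - (b - β)) 1, ?_⟩
    rintro _ ⟨k, rfl⟩
    by_cases hk : N ≤ k
    · exact le_max_of_le_right (hN k hk)
    · push_neg at hk
      refine le_max_of_le_left (le_trans (hφleL k) ?_)
      have : (a - α) * k ≤ (a - α) * N := mul_le_mul_of_nonneg_left hk.le (by linarith)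
      linarith
  set η := sSup (Set.range φ) with hηdef
  have hlub : IsLUB (Set.range φ) η := isLUB_csSup (Set.range_nonempty φ) hbdd
  have hφle : ∀ k, φ k ≤ η := fun k => hlub.1 (Set.mem_range_self k)
  have hη0 : 0 ≤ η := by
    by_contra hcon; push_neg at hcon
    obtain ⟨k, hk⟩ := (hφtop.eventually (eventually_gt_nhds hcon)).exists
    exact absurd (hφle k) (not_le.2 hk)
  have hh0 : ∀ x, 0 ≤ h x :=
    hhmax (fun _ => 0) (convexOn_const 0 convex_univ) (fun x => hd0 x)
  have hhm : ∀ x, (a - α) * x - (b - β) - η ≤ h x := by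
    have hcv : ConvexOn ℝ Set.univ (fun x : ℝ => (a - α) * x + (-(b - β) - η)) :=
      affineConvexOn _ _
    have h1 := hhmax _ hcv (fun x => by
      have h2 := hφle x; simp only [hφdef] at h2
      show (a - α) * x + (-(b - β) - η) ≤ g x - f x
      linarith)
    intro x; have := h1 x; linarith
  have hhbot : Tendsto h atBot (nhds 0) :=
    tendsto_of_tendsto_of_tendsto_of_le_of_le tendsto_const_nhds hdbot
      (fun x => hh0 x) (fun x => hhle x)
  have hhmono : Monotone h := monotone_of_convex_tendsto_atBot hhconv hhbot
  refine ⟨hαa, hab, η, hη0, hlub, hh0, hhmono, hhconv, hhbot, ?_⟩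
  rcases eq_or_lt_of_le hαa with hEq | hlt
  · -- case α = a : h ≡ 0 and η = β - b
    subst hEq
    have hdtop : Tendsto (fun k => g k - f k) atTop (nhds (β - b)) := by
      have h1 := hgtop.sub hftop
      rw [sub_zero] at h1
      have h2 := h1.sub_const (b - β)
      rw [zero_sub, neg_sub] at h2
      exact h2.congr (fun k => by ring)
    have hzero : ∀ x, h x = 0 := by
      intro x
      refine le_antisymm ?_ (hh0 x)
      by_contra hcon; push_neg at hcon
      have hev : ∀ᶠ z in atBot, h z < h x := hhbot.eventually (eventually_lt_nhds hcon)
      obtain ⟨z, hz1, hz2⟩ := (hev.and (eventually_lt_atBot x)).exists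
      have hblow := convex_blowup_top hhconv hz2 hz1
      exact not_tendsto_atTop_of_tendsto_nhds hdtop
        (tendsto_atTop_mono (fun w => hhle w) hblow)
    have hηeq : η = β - b := by
      refine le_antisymm (csSup_le (Set.range_nonempty φ) ?_) ?_
      · rintro _ ⟨k, rfl⟩
        have := hd0 k
        simp only [hφdef]
        nlinarith
      · by_contra hcon; push_neg at hcon
        have hφbot : Tendsto φ atBot (nhds (β - b)) := by
          have h1 := (tendsto_const_nhds (α := ℝ) (x := β - b) (f := atBot)).sub hdbot
          rw [sub_zero] at h1
          exact h1.congr (fun k => by simp only [hφdef]; ring)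
        obtain ⟨k, hk⟩ := (hφbot.eventually (eventually_gt_nhds hcon)).exists
        exact absurd (hφle k) (not_le.2 hk)
    have hfun : (fun z : ℝ => h z - ((α - α) * z - (b - β + η))) = fun _ : ℝ => (0:ℝ) := by
      funext z; rw [hzero z, hηeq]; ring
    rw [hfun]
    exact tendsto_const_nhds
  · -- case α < a
    set ψ : ℝ → ℝ := fun z : ℝ => h z - ((a - α) * z - (b - β) - η) with hψdef
    have hψ0 : ∀ z, 0 ≤ ψ z := by
      intro z; have := hhm z; simp only [hψdef]; linarith
    have hψle : ∀ z, ψ z ≤ η - φ z := by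
      intro z; have h1 : h z ≤ g z - f z := hhle z; simp only [hψdef, hφdef]; linarith
    have hηφ : Tendsto (fun z => η - φ z) atTop (nhds η) := by
      have h1 := (tendsto_const_nhds (α := ℝ) (x := η) (f := atTop)).sub hφtop
      rwa [sub_zero] at h1
    have key : Tendsto ψ atTop (nhds 0) := by
      rcases eq_or_lt_of_le hη0 with hη | hη
      · -- η = 0 : squeeze
        have h2 : Tendsto (fun z => η - φ z) atTop (nhds 0) := by rw [hη]; exact hηφ
        exact tendsto_of_tendsto_of_tendsto_of_le_of_le tendsto_const_nhds h2 hψ0 hψle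
      · -- η > 0 : the sup is attained
        have hfc : Continuous f := continuousOn_univ.1 (hfconv.continuousOn isOpen_univ)
        have hgc : Continuous g := continuousOn_univ.1 (hgconv.continuousOn isOpen_univ)
        have hφc : Continuous φ := by
          simp only [hφdef]
          exact (((continuous_const.mul continuous_id).sub continuous_const).sub hgc).add hfc
        obtain ⟨N, hN⟩ := Filter.eventually_atTop.1
          (hφtop.eventually (eventually_le_nhds (half_pos hη)))
        have hLbot : Tendsto (fun k : ℝ => (a - α) * k - (b - β)) atBot atBot := by
          have h1 : Tendsto (fun k : ℝ => (α - a) * k + (b - β)) atBot atTop := by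
            have h2 : Tendsto (fun w : ℝ => (a - α) * w + (b - β)) atTop atTop :=
              tendsto_atTop_add_const_right _ _
                (Tendsto.const_mul_atTop (by linarith) tendsto_id)
            exact (h2.comp tendsto_neg_atBot_atTop).congr
              (fun k => by simp [Function.comp]; ring)
          exact (tendsto_neg_atTop_atBot.comp h1).congr (fun k => by simp [Function.comp]; ring)
        obtain ⟨N₂, hN₂⟩ := Filter.eventually_atBot.1
          (hLbot.eventually (eventually_le_atBot (η / 2)))
        obtain ⟨k₀, hk₀mem, hk₀max⟩ := isCompact_Icc.exists_isMaxOn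
          (Set.nonempty_Icc.2 (min_le_max (a := N₂) (b := N))) hφc.continuousOn
        have hk₀ : φ k₀ = η := by
          refine le_antisymm (hφle k₀) ?_
          have hsup : η ≤ max (φ k₀) (η / 2) := by
            refine csSup_le (Set.range_nonempty φ) ?_
            rintro _ ⟨k, rfl⟩
            by_cases hk : k ∈ Set.Icc (min N₂ N) (max N₂ N)
            · exact le_max_of_le_left (hk₀max hk)
            · rw [Set.mem_Icc] at hk
              push_neg at hk
              rcases lt_or_ge k (min N₂ N) with hk1 | hk1
              · refine le_max_of_le_right ?_
                refine le_trans (hφleL k) (hN₂ k ?_)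
                exact le_trans hk1.le (min_le_left _ _)
              · refine le_max_of_le_right (hN k ?_)
                exact le_trans (le_max_right N₂ N) (hk hk1).le
          rcases le_max_iff.1 hsup with h1 | h1
          · exact h1
          · linarith
        have hψk₀ : ψ k₀ = 0 := by
          refine le_antisymm ?_ (hψ0 k₀)
          have h1 : h k₀ ≤ g k₀ - f k₀ := hhle k₀
          simp only [hφdef] at hk₀
          simp only [hψdef]
          linarith
        have hψconv : ConvexOn ℝ Set.univ ψ := by
          have h1 : ψ = fun z : ℝ => h z + ((-(a - α)) * z + (b - β + η)) := by
            funext z; simp only [hψdef]; ring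
          rw [h1]
          exact hhconv.add (affineConvexOn _ _)
        have hev : ∀ z, k₀ < z → ψ z = 0 := by
          intro z hz
          by_contra hcon
          have hpos : 0 < ψ z := lt_of_le_of_ne (hψ0 z) (Ne.symm hcon)
          have hblow := convex_blowup_top hψconv hz (by rw [hψk₀]; exact hpos)
          exact not_tendsto_atTop_of_tendsto_nhds hηφ (tendsto_atTop_mono hψle hblow)
        refine Tendsto.congr' ?_ (tendsto_const_nhds (α := ℝ) (x := 0) (f := atTop))
        filter_upwards [eventually_gt_atTop k₀] with z hz
        exact (hev z hz).symm
    exact key.congr (fun z => by simp only [hψdef]; ring)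
end
end

section
/- Let μ, ν ∈ 𝓜 with μ ≤_pcd ν. Then there exists a unique measure θ ∈ 𝓜 such that: (i) μ ≤_cd θ; (ii) θ(A) ≤ ν(A) for every Borel set A ⊆ ℝ; and (iii) for every η ∈ 𝓜 with μ ≤_cd η and η(A) ≤ ν(A) for all Borel A, one has η ≤_cd θ. -/
open MeasureTheory Set Filter

noncomputable section

/-! ### Auxiliary lemmas for Proposition 3.1 -/

section Prop31Aux

lemma pp_convexOn_posPart (k : ℝ) : ConvexOn ℝ Set.univ (fun x : ℝ => max (k - x) 0) := by
  have h1 : ConvexOn ℝ Set.univ (fun x : ℝ => k - x) := by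
    refine ⟨convex_univ, fun x _ y _ a b ha hb hab => le_of_eq ?_⟩
    simp only [smul_eq_mul]
    linear_combination (-k) * hab
  exact h1.sup (convexOn_const 0 convex_univ)

lemma pp_antitone_posPart (k : ℝ) : Antitone (fun x : ℝ => max (k - x) 0) := by
  intro x y hxy
  exact max_le_max (by linarith) le_rfl

lemma pp_integrable_posPart (θ : MeasureTheory.Measure ℝ) [MeasureTheory.IsFiniteMeasure θ]
    (hid : MeasureTheory.Integrable (fun x : ℝ => x) θ) (k : ℝ) :
    MeasureTheory.Integrable (fun x : ℝ => max (k - x) 0) θ := by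
  have h1 : MeasureTheory.Integrable (fun x : ℝ => |k| + |x|) θ :=
    (MeasureTheory.integrable_const |k|).add hid.abs
  refine h1.mono ((pp_antitone_posPart k).measurable).aestronglyMeasurable
    (MeasureTheory.ae_of_all _ fun x => ?_)
  simp only [Real.norm_eq_abs]
  rw [abs_of_nonneg (le_max_right _ _), abs_of_nonneg (by positivity)]
  rcases le_or_gt (k - x) 0 with h | h
  · rw [max_eq_right h]; positivity
  · rw [max_eq_left h.le]
    have := abs_nonneg k
    have := le_abs_self k
    have := neg_abs_le x
    linarith

lemma pp_posPart_diff_le (a ε : ℝ) (hε : 0 ≤ ε) : max (a + ε) 0 - max a 0 ≤ ε := by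
  rcases le_or_gt a 0 with h | h
  · rw [max_eq_right h, sub_zero]
    exact max_le (by linarith) hε
  · rw [max_eq_left h.le, max_eq_left (by linarith)]; linarith

lemma pp_posPart_mono_k (a ε : ℝ) (hε : 0 ≤ ε) : max a 0 ≤ max (a + ε) 0 :=
  max_le_max (by linarith) le_rfl

lemma pp_tendsto_quotient_indicator (k : ℝ) (x : ℝ) :
    Filter.Tendsto (fun n : ℕ => ((n:ℝ)+1) * (max (k + 1/((n:ℝ)+1) - x) 0 - max (k - x) 0))
      Filter.atTop (nhds (Set.indicator (Set.Iic k) (fun _ => (1:ℝ)) x)) := by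
  rcases le_or_gt x k with hx | hx
  · have : ∀ n : ℕ, ((n:ℝ)+1) * (max (k + 1/((n:ℝ)+1) - x) 0 - max (k - x) 0) = 1 := by
      intro n
      have hn : (0:ℝ) < (n:ℝ) + 1 := by positivity
      have hpos : (0:ℝ) < 1/((n:ℝ)+1) := by positivity
      rw [max_eq_left (by linarith), max_eq_left (by linarith)]
      field_simp
      ring
    rw [Set.indicator_of_mem (Set.mem_Iic.mpr hx)]
    simp only [this]
    exact tendsto_const_nhds
  · rw [Set.indicator_of_notMem (by simpa using hx)]
    obtain ⟨N, hN⟩ := exists_nat_one_div_lt (sub_pos.mpr hx)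
    refine tendsto_const_nhds.congr' ?_
    filter_upwards [Filter.eventually_ge_atTop N] with n hn
    have hn1 : (0:ℝ) < (n:ℝ) + 1 := by positivity
    have h1 : 1/((n:ℝ)+1) ≤ 1/((N:ℝ)+1) := by
      apply one_div_le_one_div_of_le (by positivity)
      have : (N:ℝ) ≤ n := by exact_mod_cast hn
      linarith
    have h2 : k + 1/((n:ℝ)+1) - x ≤ 0 := by linarith
    rw [max_eq_right h2, max_eq_right (by linarith)]
    ring

lemma pp_norm_quotient_le_one (k x : ℝ) (n : ℕ) :
    ‖((n:ℝ)+1) * (max (k + 1/((n:ℝ)+1) - x) 0 - max (k - x) 0)‖ ≤ 1 := by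
  have hn1 : (0:ℝ) < (n:ℝ) + 1 := by positivity
  have he : k - x + 1/((n:ℝ)+1) = k + 1/((n:ℝ)+1) - x := by ring
  have h0 : 0 ≤ max (k + 1/((n:ℝ)+1) - x) 0 - max (k - x) 0 := by
    have := pp_posPart_mono_k (k - x) (1/((n:ℝ)+1)) (by positivity)
    rw [he] at this; linarith
  have h1 : max (k + 1/((n:ℝ)+1) - x) 0 - max (k - x) 0 ≤ 1/((n:ℝ)+1) := by
    have := pp_posPart_diff_le (k - x) (1/((n:ℝ)+1)) (by positivity)
    rw [he] at this; linarith
  rw [Real.norm_eq_abs, abs_of_nonneg (by positivity)]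
  calc ((n:ℝ)+1) * (max (k + 1/((n:ℝ)+1) - x) 0 - max (k - x) 0)
      ≤ ((n:ℝ)+1) * (1/((n:ℝ)+1)) := mul_le_mul_of_nonneg_left h1 (by positivity)
    _ = 1 := by field_simp

lemma pp_iic_eq_of_potentials_eq (θ₁ θ₂ : MeasureTheory.Measure ℝ)
    [MeasureTheory.IsFiniteMeasure θ₁] [MeasureTheory.IsFiniteMeasure θ₂]
    (hP : ∀ k : ℝ, ∫ x, max (k - x) 0 ∂θ₁ = ∫ x, max (k - x) 0 ∂θ₂)
    (hi₁ : MeasureTheory.Integrable (fun x : ℝ => x) θ₁)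
    (hi₂ : MeasureTheory.Integrable (fun x : ℝ => x) θ₂) :
    θ₁ = θ₂ := by
  refine MeasureTheory.Measure.ext_of_Iic θ₁ θ₂ (fun k => ?_)
  set F : ℕ → ℝ → ℝ :=
    fun n x => ((n:ℝ)+1) * (max (k + 1/((n:ℝ)+1) - x) 0 - max (k - x) 0) with hF
  have hmeas : ∀ n : ℕ, Measurable (F n) :=
    fun n => measurable_const.mul
      (((pp_antitone_posPart _).measurable).sub ((pp_antitone_posPart k).measurable))
  have key : ∀ θ : MeasureTheory.Measure ℝ, MeasureTheory.IsFiniteMeasure θ →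
      MeasureTheory.Integrable (fun x : ℝ => x) θ →
      Filter.Tendsto (fun n : ℕ => ∫ x, F n x ∂θ) Filter.atTop
        (nhds (θ (Set.Iic k)).toReal) := by
    intro θ hfin hid
    have := hfin
    have h := MeasureTheory.tendsto_integral_of_dominated_convergence (μ := θ)
      (F := F) (f := Set.indicator (Set.Iic k) (fun _ => (1:ℝ))) (fun _ => (1:ℝ))
      (fun n => (hmeas n).aestronglyMeasurable) (MeasureTheory.integrable_const 1)
      (fun n => MeasureTheory.ae_of_all _ (fun x => pp_norm_quotient_le_one k x n))
      (MeasureTheory.ae_of_all _ (fun x => pp_tendsto_quotient_indicator k x))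
    rwa [MeasureTheory.integral_indicator_const (1:ℝ) measurableSet_Iic, smul_eq_mul,
      mul_one] at h
  have hval : ∀ n : ℕ, ∫ x, F n x ∂θ₁ = ∫ x, F n x ∂θ₂ := by
    intro n
    have e : ∀ θ : MeasureTheory.Measure ℝ, MeasureTheory.IsFiniteMeasure θ →
        MeasureTheory.Integrable (fun x : ℝ => x) θ →
        ∫ x, F n x ∂θ = ((n:ℝ)+1) *
          ((∫ x, max (k + 1/((n:ℝ)+1) - x) 0 ∂θ) - ∫ x, max (k - x) 0 ∂θ) := by
      intro θ hfin hid
      have := hfin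
      rw [hF]
      rw [MeasureTheory.integral_const_mul]
      rw [MeasureTheory.integral_sub (pp_integrable_posPart θ hid _)
        (pp_integrable_posPart θ hid _)]
    rw [e θ₁ inferInstance hi₁, e θ₂ inferInstance hi₂, hP, hP]
  have t1 := key θ₁ inferInstance hi₁
  have t2 := key θ₂ inferInstance hi₂
  have := tendsto_nhds_unique (t1.congr (fun n => hval n)) t2
  exact (ENNReal.toReal_eq_toReal_iff' (MeasureTheory.measure_ne_top _ _)
    (MeasureTheory.measure_ne_top _ _)).mp this

lemma pp_mass_eq_of_lecd (η χ : MeasureTheory.Measure ℝ)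
    [MeasureTheory.IsFiniteMeasure η] [MeasureTheory.IsFiniteMeasure χ]
    (h : LeCD η χ) : (η Set.univ).toReal = (χ Set.univ).toReal := by
  have h1 := h (fun _ => (1:ℝ)) (convexOn_const 1 convex_univ) antitone_const
    (MeasureTheory.integrable_const 1) (MeasureTheory.integrable_const 1)
  have h2 := h (fun _ => (-1:ℝ)) (convexOn_const (-1) convex_univ) antitone_const
    (MeasureTheory.integrable_const (-1)) (MeasureTheory.integrable_const (-1))
  simp only [MeasureTheory.integral_const, smul_eq_mul, mul_one, mul_neg, MeasureTheory.measureReal_def] at h1 h2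
  linarith

lemma pp_lecd_antisymm (θ₁ θ₂ : MeasureTheory.Measure ℝ) (h₁ : MemM θ₁) (h₂ : MemM θ₂)
    (h12 : LeCD θ₁ θ₂) (h21 : LeCD θ₂ θ₁) : θ₁ = θ₂ := by
  haveI := h₁.1; haveI := h₂.1
  refine pp_iic_eq_of_potentials_eq θ₁ θ₂ (fun k => ?_) h₁.2 h₂.2
  exact le_antisymm
    (h12 _ (pp_convexOn_posPart k) (pp_antitone_posPart k)
      (pp_integrable_posPart θ₁ h₁.2 k) (pp_integrable_posPart θ₂ h₂.2 k))
    (h21 _ (pp_convexOn_posPart k) (pp_antitone_posPart k)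
      (pp_integrable_posPart θ₂ h₂.2 k) (pp_integrable_posPart θ₁ h₁.2 k))

lemma pp_clamp_convex (f : ℝ → ℝ) (c : ℝ) (hconv : ConvexOn ℝ Set.univ f) :
    ConvexOn ℝ Set.univ (fun x => max (f x) c - c) :=
  (hconv.sup (convexOn_const c convex_univ)).sub (concaveOn_const c convex_univ)

lemma pp_clamp_antitone (f : ℝ → ℝ) (c : ℝ) (hanti : Antitone f) :
    Antitone (fun x => max (f x) c - c) := by
  intro x y hxy
  have := max_le_max (hanti hxy) (le_refl c)
  simp only
  linarith

lemma pp_clamp_nonneg (f : ℝ → ℝ) (c : ℝ) : ∀ x, 0 ≤ max (f x) c - c := fun x => by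
  have := le_max_right (f x) c; linarith

/-- Case of equal masses: `LePCD` plus equal masses implies `LeCD`. -/
lemma pp_lecd_of_lepcd_mass (ρ ν : MeasureTheory.Measure ℝ)
    [MeasureTheory.IsFiniteMeasure ρ] [MeasureTheory.IsFiniteMeasure ν]
    (hpcd : LePCD ρ ν) (hmass : (ρ Set.univ).toReal = (ν Set.univ).toReal) : LeCD ρ ν := by
  intro f hconv hanti hfρ hfν
  have hmeas : Measurable f := hanti.measurable
  have key : ∀ K : ℝ, ∫ x, f x ∂ρ ≤ ∫ x, max (f x) (f K) ∂ν := by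
    intro K
    set g : ℝ → ℝ := fun x => max (f x) (f K) - f K with hg
    have hgρ : MeasureTheory.Integrable g ρ :=
      (hfρ.sup (MeasureTheory.integrable_const _)).sub (MeasureTheory.integrable_const _)
    have hgν : MeasureTheory.Integrable g ν :=
      (hfν.sup (MeasureTheory.integrable_const _)).sub (MeasureTheory.integrable_const _)
    have h2 := hpcd g (pp_clamp_nonneg f (f K)) (pp_clamp_convex f (f K) hconv)
      (pp_clamp_antitone f (f K) hanti) hgρ hgν
    have hsupρ : MeasureTheory.Integrable (fun x => max (f x) (f K)) ρ :=
      hfρ.sup (MeasureTheory.integrable_const _)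
    have hsupν : MeasureTheory.Integrable (fun x => max (f x) (f K)) ν :=
      hfν.sup (MeasureTheory.integrable_const _)
    have e1 : ∫ x, g x ∂ρ = (∫ x, max (f x) (f K) ∂ρ) - f K * (ρ Set.univ).toReal := by
      rw [hg, MeasureTheory.integral_sub hsupρ (MeasureTheory.integrable_const _),
        MeasureTheory.integral_const, MeasureTheory.measureReal_def, smul_eq_mul, mul_comm]
    have e2 : ∫ x, g x ∂ν = (∫ x, max (f x) (f K) ∂ν) - f K * (ν Set.univ).toReal := by
      rw [hg, MeasureTheory.integral_sub hsupν (MeasureTheory.integrable_const _),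
        MeasureTheory.integral_const, MeasureTheory.measureReal_def, smul_eq_mul, mul_comm]
    have h1 : ∫ x, f x ∂ρ ≤ ∫ x, max (f x) (f K) ∂ρ :=
      MeasureTheory.integral_mono hfρ hsupρ (fun x => le_max_left _ _)
    rw [e1, e2] at h2
    rw [hmass] at h2
    linarith
  have hten : Filter.Tendsto (fun n : ℕ => ∫ x, max (f x) (f n) ∂ν) Filter.atTop
      (nhds (∫ x, f x ∂ν)) := by
    apply MeasureTheory.tendsto_integral_of_dominated_convergence (fun x => |f x| + |f 0|)
    · exact fun n => (hmeas.max measurable_const).aestronglyMeasurable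
    · exact hfν.abs.add (MeasureTheory.integrable_const _)
    · intro n
      refine MeasureTheory.ae_of_all _ (fun x => ?_)
      rw [Real.norm_eq_abs, abs_le]
      constructor
      · have h1 : -|f x| ≤ f x := neg_abs_le _
        have h2 : f x ≤ max (f x) (f n) := le_max_left _ _
        have h3 : (0:ℝ) ≤ |f 0| := abs_nonneg _
        linarith
      · have h1 : f n ≤ f 0 := hanti (by exact_mod_cast Nat.cast_nonneg n)
        have h2 : f 0 ≤ |f 0| := le_abs_self _
        have h3 : f x ≤ |f x| := le_abs_self _
        have h4 : (0:ℝ) ≤ |f 0| := abs_nonneg _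
        have h5 : (0:ℝ) ≤ |f x| := abs_nonneg _
        rcases max_cases (f x) (f n) with ⟨he, _⟩ | ⟨he, _⟩ <;> rw [he] <;> linarith
    · refine MeasureTheory.ae_of_all _ (fun x => ?_)
      obtain ⟨N, hN⟩ := exists_nat_ge x
      refine tendsto_const_nhds.congr' ?_
      filter_upwards [Filter.eventually_ge_atTop N] with n hn
      have hxn : x ≤ (n:ℝ) := le_trans hN (by exact_mod_cast hn)
      rw [max_eq_left (hanti hxn)]
  exact ge_of_tendsto hten (Filter.Eventually.of_forall (fun n => key n))

/-- The candidate maximal measure: leftmost part of `ν` of mass `m`. -/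
def thetaOf (ν : MeasureTheory.Measure ℝ) (q m : ℝ) : MeasureTheory.Measure ℝ :=
  ν.restrict (Set.Iio q) +
    (ENNReal.ofReal (m - (ν (Set.Iio q)).toReal)) • MeasureTheory.Measure.dirac q

lemma pp_thetaOf_isFiniteMeasure (ν : MeasureTheory.Measure ℝ)
    [MeasureTheory.IsFiniteMeasure ν] (q m : ℝ) :
    MeasureTheory.IsFiniteMeasure (thetaOf ν q m) := by
  constructor
  rw [thetaOf, MeasureTheory.Measure.add_apply, MeasureTheory.Measure.smul_apply, smul_eq_mul]
  have h1 : ν.restrict (Set.Iio q) Set.univ < ⊤ := by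
    rw [MeasureTheory.Measure.restrict_apply_univ]; exact MeasureTheory.measure_lt_top ν _
  have h2 : ENNReal.ofReal (m - (ν (Set.Iio q)).toReal) *
      MeasureTheory.Measure.dirac q Set.univ < ⊤ := by
    rw [MeasureTheory.measure_univ, mul_one]; exact ENNReal.ofReal_lt_top
  exact ENNReal.add_lt_top.mpr ⟨h1, h2⟩

lemma pp_integrable_id_dirac (q : ℝ) :
    MeasureTheory.Integrable (fun x : ℝ => x) (MeasureTheory.Measure.dirac q) := by
  constructor
  · exact measurable_id.aestronglyMeasurable
  · rw [MeasureTheory.HasFiniteIntegral]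
    rw [MeasureTheory.lintegral_dirac' q (by measurability)]
    exact ENNReal.coe_lt_top

lemma pp_thetaOf_integrable_id (ν : MeasureTheory.Measure ℝ)
    [MeasureTheory.IsFiniteMeasure ν]
    (hν : MeasureTheory.Integrable (fun x : ℝ => x) ν) (q m : ℝ) :
    MeasureTheory.Integrable (fun x : ℝ => x) (thetaOf ν q m) := by
  rw [thetaOf]
  exact (hν.restrict).add_measure
    ((pp_integrable_id_dirac q).smul_measure ENNReal.ofReal_ne_top)

lemma pp_thetaOf_univ (ν : MeasureTheory.Measure ℝ) [MeasureTheory.IsFiniteMeasure ν]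
    (q m : ℝ) (hr : (ν (Set.Iio q)).toReal ≤ m) :
    thetaOf ν q m Set.univ = ENNReal.ofReal m := by
  rw [thetaOf, MeasureTheory.Measure.add_apply, MeasureTheory.Measure.restrict_apply_univ,
    MeasureTheory.Measure.smul_apply, smul_eq_mul, MeasureTheory.measure_univ, mul_one]
  have h1 : ν (Set.Iio q) = ENNReal.ofReal ((ν (Set.Iio q)).toReal) :=
    (ENNReal.ofReal_toReal (MeasureTheory.measure_ne_top _ _)).symm
  nth_rewrite 1 [h1]
  rw [← ENNReal.ofReal_add ENNReal.toReal_nonneg (by linarith)]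
  congr 1
  ring

/-- Main comparison: any measure `ρ` with `LePCD ρ ν` and mass `m` satisfies
`LeCD ρ (thetaOf ν q m)`. -/
lemma pp_lecd_thetaOf (ρ ν : MeasureTheory.Measure ℝ)
    [MeasureTheory.IsFiniteMeasure ρ] [MeasureTheory.IsFiniteMeasure ν]
    (q m : ℝ) (hm : (ρ Set.univ).toReal = m) (hr : (ν (Set.Iio q)).toReal ≤ m)
    (hpcd : LePCD ρ ν) : LeCD ρ (thetaOf ν q m) := by
  intro f hconv hanti hfρ hfθ
  set r := (ν (Set.Iio q)).toReal with hrdef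
  rw [thetaOf] at hfθ
  obtain ⟨hfres, hfd⟩ := MeasureTheory.integrable_add_measure.mp hfθ
  set g : ℝ → ℝ := fun x => max (f x) (f q) - f q with hg
  have hsupρ : MeasureTheory.Integrable (fun x => max (f x) (f q)) ρ :=
    hfρ.sup (MeasureTheory.integrable_const _)
  have hgρ : MeasureTheory.Integrable g ρ := hsupρ.sub (MeasureTheory.integrable_const _)
  have hgind : g = Set.indicator (Set.Iio q) (fun x => f x - f q) := by
    funext x
    by_cases hx : x < q
    · rw [Set.indicator_of_mem (Set.mem_Iio.mpr hx), hg]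
      simp only
      rw [max_eq_left (hanti hx.le)]
    · rw [Set.indicator_of_notMem (by simpa using hx), hg]
      simp only
      rw [max_eq_right (hanti (not_lt.mp hx))]
      ring
  have hfres' : MeasureTheory.Integrable (fun x => f x - f q) (ν.restrict (Set.Iio q)) :=
    hfres.sub (MeasureTheory.integrable_const _)
  have hgν : MeasureTheory.Integrable g ν := by
    rw [hgind, MeasureTheory.integrable_indicator_iff measurableSet_Iio]
    exact hfres'
  have h2 := hpcd g (pp_clamp_nonneg f (f q)) (pp_clamp_convex f (f q) hconv)
    (pp_clamp_antitone f (f q) hanti) hgρ hgν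
  have e1 : ∫ x, g x ∂ρ = (∫ x, max (f x) (f q) ∂ρ) - m * f q := by
    rw [hg, MeasureTheory.integral_sub hsupρ (MeasureTheory.integrable_const _),
      MeasureTheory.integral_const, MeasureTheory.measureReal_def, smul_eq_mul, hm]
  have e2 : ∫ x, g x ∂ν = (∫ x in Set.Iio q, f x ∂ν) - r * f q := by
    rw [hgind, MeasureTheory.integral_indicator measurableSet_Iio,
      MeasureTheory.integral_sub hfres (MeasureTheory.integrable_const _),
      MeasureTheory.integral_const, MeasureTheory.measureReal_restrict_apply_univ,
        MeasureTheory.measureReal_def, smul_eq_mul]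
  have e3 : ∫ x, f x ∂(thetaOf ν q m) = (∫ x in Set.Iio q, f x ∂ν) + (m - r) * f q := by
    rw [thetaOf, MeasureTheory.integral_add_measure hfres hfd,
      MeasureTheory.integral_smul_measure, MeasureTheory.integral_dirac,
      ENNReal.toReal_ofReal (by linarith), smul_eq_mul]
  have h1 : ∫ x, f x ∂ρ ≤ ∫ x, max (f x) (f q) ∂ρ :=
    MeasureTheory.integral_mono hfρ hsupρ (fun x => le_max_left _ _)
  rw [e1, e2] at h2
  rw [e3]
  linarith

/-- `thetaOf` is setwise dominated by `ν`. -/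
lemma pp_thetaOf_le (ν : MeasureTheory.Measure ℝ) [MeasureTheory.IsFiniteMeasure ν] (q m : ℝ)
    (hr : (ν (Set.Iio q)).toReal ≤ m) (hq : ENNReal.ofReal m ≤ ν (Set.Iic q)) :
    ∀ A : Set ℝ, MeasurableSet A → thetaOf ν q m A ≤ ν A := by
  intro A hA
  rw [thetaOf, MeasureTheory.Measure.add_apply, MeasureTheory.Measure.restrict_apply hA,
    MeasureTheory.Measure.smul_apply, smul_eq_mul, MeasureTheory.Measure.dirac_apply' q hA]
  by_cases hqA : q ∈ A
  · rw [Set.indicator_of_mem hqA, Pi.one_apply, mul_one]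
    have hsingle : ENNReal.ofReal (m - (ν (Set.Iio q)).toReal) ≤ ν {q} := by
      have hiic : ν (Set.Iic q) = ν (Set.Iio q) + ν {q} := by
        rw [← Set.Iio_union_right,
          MeasureTheory.measure_union (by simp) (measurableSet_singleton q)]
      have heq : ENNReal.ofReal (m - (ν (Set.Iio q)).toReal)
          = ENNReal.ofReal m - ν (Set.Iio q) := by
        rw [ENNReal.ofReal_sub m ENNReal.toReal_nonneg,
          ENNReal.ofReal_toReal (MeasureTheory.measure_ne_top ν _)]
      rw [heq]
      rw [hiic] at hq
      exact tsub_le_iff_left.mpr hq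
    calc ν (A ∩ Set.Iio q) + ENNReal.ofReal (m - (ν (Set.Iio q)).toReal)
        ≤ ν (A ∩ Set.Iio q) + ν {q} := add_le_add_right hsingle _
      _ = ν ((A ∩ Set.Iio q) ∪ {q}) := by
          rw [MeasureTheory.measure_union ?_ (measurableSet_singleton q)]
          rw [Set.disjoint_singleton_right]
          rintro ⟨-, hlt⟩
          exact lt_irrefl q hlt
      _ ≤ ν A := MeasureTheory.measure_mono (by
          rintro x (⟨hxA, -⟩ | hx)
          · exact hxA
          · rw [Set.mem_singleton_iff] at hx; rw [hx]; exact hqA)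
  · rw [Set.indicator_of_notMem hqA, mul_zero, add_zero]
    exact MeasureTheory.measure_mono Set.inter_subset_left

lemma pp_exists_q (ν : MeasureTheory.Measure ℝ) [MeasureTheory.IsFiniteMeasure ν] (m : ℝ)
    (hm0 : 0 < m) (hmlt : m < (ν Set.univ).toReal) :
    ∃ q : ℝ, (ν (Set.Iio q)).toReal ≤ m ∧ ENNReal.ofReal m ≤ ν (Set.Iic q) := by
  set S : Set ℝ := {t : ℝ | ENNReal.ofReal m ≤ ν (Set.Iic t)} with hS
  have hSne : S.Nonempty := by
    have hlt : ENNReal.ofReal m < ν Set.univ :=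
      (ENNReal.ofReal_lt_iff_lt_toReal hm0.le (measure_ne_top _ _)).mpr hmlt
    have := (tendsto_measure_Iic_atTop ν).eventually (eventually_ge_nhds hlt)
    obtain ⟨t0, ht0⟩ := this.exists
    exact ⟨t0, ht0⟩
  have hSbdd : BddBelow S := by
    have hempty : (⋂ n : ℕ, Set.Iic (-(n:ℝ))) = ∅ := by
      rw [Set.eq_empty_iff_forall_notMem]
      intro x hx
      obtain ⟨N, hN⟩ := exists_nat_gt (-x)
      have := Set.mem_iInter.mp hx N
      rw [Set.mem_Iic] at this
      linarith
    have hten : Tendsto (fun n : ℕ => ν (Set.Iic (-(n:ℝ)))) atTop (nhds 0) := by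
      have h := tendsto_measure_iInter_atTop (μ := ν) (s := fun n : ℕ => Set.Iic (-(n:ℝ)))
        (fun n => measurableSet_Iic.nullMeasurableSet)
        (fun a b hab => Set.Iic_subset_Iic.mpr (by have : (a:ℝ) ≤ b := Nat.cast_le.mpr hab; linarith))
        ⟨0, measure_ne_top _ _⟩
      rwa [hempty, measure_empty] at h
    have hpos : (0:ENNReal) < ENNReal.ofReal m := ENNReal.ofReal_pos.mpr hm0
    have := hten.eventually (eventually_lt_nhds hpos)
    obtain ⟨n0, hn0⟩ := this.exists
    refine ⟨-(n0:ℝ), fun t ht => ?_⟩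
    by_contra hlt
    push_neg at hlt
    have : ν (Set.Iic t) ≤ ν (Set.Iic (-(n0:ℝ))) := measure_mono (Set.Iic_subset_Iic.mpr hlt.le)
    exact absurd (le_trans ht this) (not_le.mpr hn0)
  set q : ℝ := sInf S with hq
  have hql : ENNReal.ofReal m ≤ ν (Set.Iic q) := by
    have hiic : (⋂ n : ℕ, Set.Iic (q + 1/((n:ℝ)+1))) = Set.Iic q := by
      ext x
      simp only [Set.mem_iInter, Set.mem_Iic]
      constructor
      · intro h
        by_contra hx
        push_neg at hx
        obtain ⟨n, hn⟩ := exists_nat_one_div_lt (sub_pos.mpr hx)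
        have := h n
        linarith
      · intro h n
        have : (0:ℝ) < 1/((n:ℝ)+1) := by positivity
        linarith
    have hten : Tendsto (fun n : ℕ => ν (Set.Iic (q + 1/((n:ℝ)+1)))) atTop
        (nhds (ν (Set.Iic q))) := by
      have h := tendsto_measure_iInter_atTop (μ := ν) (s := fun n : ℕ => Set.Iic (q + 1/((n:ℝ)+1)))
        (fun n => measurableSet_Iic.nullMeasurableSet) ?_ ⟨0, measure_ne_top _ _⟩
      · rwa [hiic] at h
      · intro a b hab
        apply Set.Iic_subset_Iic.mpr
        have h1 : ((a:ℝ)+1) ≤ ((b:ℝ)+1) := by have : (a:ℝ) ≤ b := Nat.cast_le.mpr hab; linarith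
        have := one_div_le_one_div_of_le (by positivity : (0:ℝ) < (a:ℝ)+1) h1
        linarith
    refine ge_of_tendsto hten (Eventually.of_forall (fun n => ?_))
    have hpos : (0:ℝ) < 1/((n:ℝ)+1) := by positivity
    obtain ⟨t, htS, htlt⟩ := (csInf_lt_iff hSbdd hSne).mp
      (lt_add_of_pos_right q hpos)
    exact le_trans htS (measure_mono (Set.Iic_subset_Iic.mpr htlt.le))
  have hqr : ν (Set.Iio q) ≤ ENNReal.ofReal m := by
    have hiio : (⋃ n : ℕ, Set.Iic (q - 1/((n:ℝ)+1))) = Set.Iio q := by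
      ext x
      simp only [Set.mem_iUnion, Set.mem_Iic, Set.mem_Iio]
      constructor
      · rintro ⟨n, hn⟩
        have : (0:ℝ) < 1/((n:ℝ)+1) := by positivity
        linarith
      · intro h
        obtain ⟨n, hn⟩ := exists_nat_one_div_lt (sub_pos.mpr h)
        exact ⟨n, by linarith⟩
    have hten : Tendsto (fun n : ℕ => ν (Set.Iic (q - 1/((n:ℝ)+1)))) atTop
        (nhds (ν (Set.Iio q))) := by
      have h := tendsto_measure_iUnion_atTop (μ := ν) (s := fun n : ℕ => Set.Iic (q - 1/((n:ℝ)+1))) ?_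
      · rwa [hiio] at h
      · intro a b hab
        apply Set.Iic_subset_Iic.mpr
        have h1 : ((a:ℝ)+1) ≤ ((b:ℝ)+1) := by have : (a:ℝ) ≤ b := Nat.cast_le.mpr hab; linarith
        have := one_div_le_one_div_of_le (by positivity : (0:ℝ) < (a:ℝ)+1) h1
        linarith
    refine le_of_tendsto hten (Eventually.of_forall (fun n => ?_))
    have hpos : (0:ℝ) < 1/((n:ℝ)+1) := by positivity
    have htnotS : q - 1/((n:ℝ)+1) ∉ S := by
      intro ht
      have := csInf_le hSbdd ht
      rw [← hq] at this
      linarith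
    rw [hS, Set.mem_setOf_eq, not_le] at htnotS
    exact htnotS.le
  exact ⟨q, ENNReal.toReal_le_of_le_ofReal hm0.le hqr, hql⟩


/-- If `η ≤ ν` setwise and masses agree then `η = ν`. -/
lemma pp_eq_of_le_mass (η ν : MeasureTheory.Measure ℝ)
    [MeasureTheory.IsFiniteMeasure η] [MeasureTheory.IsFiniteMeasure ν]
    (hle : ∀ A : Set ℝ, MeasurableSet A → η A ≤ ν A)
    (hm : η Set.univ = ν Set.univ) : η = ν := by
  refine MeasureTheory.Measure.ext (fun s hs => ?_)
  refine le_antisymm (hle s hs) ?_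
  have h2 := hle sᶜ hs.compl
  have hsum : ν s + ν sᶜ = η s + η sᶜ := by
    rw [MeasureTheory.measure_add_measure_compl hs,
      MeasureTheory.measure_add_measure_compl hs, hm]
  have : ν s + ν sᶜ ≤ η s + ν sᶜ := by
    rw [hsum]
    exact add_le_add_right h2 _
  exact (ENNReal.add_le_add_iff_right (MeasureTheory.measure_ne_top ν sᶜ)).mp this

end Prop31Aux

/-- Proposition 3.1: existence and uniqueness of the maximal element `T^ν(μ)`
of `{η : μ ≤_cd η ≤ ν}` with respect to `≤_cd`. -/
theorem maximal_element_exists_unique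
    (μ ν : MeasureTheory.Measure ℝ) (hμ : MemM μ) (hν : MemM ν)
    (hpcd : LePCD μ ν) :
    ∃! θ : MeasureTheory.Measure ℝ, MemM θ ∧ LeCD μ θ ∧
      (∀ A : Set ℝ, MeasurableSet A → θ A ≤ ν A) ∧
      (∀ η : MeasureTheory.Measure ℝ, MemM η → LeCD μ η →
        (∀ A : Set ℝ, MeasurableSet A → η A ≤ ν A) → LeCD η θ) := by
  classical
  haveI hμf := hμ.1
  haveI hνf := hν.1
  have hex : ∃ θ : MeasureTheory.Measure ℝ, MemM θ ∧ LeCD μ θ ∧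
      (∀ A : Set ℝ, MeasurableSet A → θ A ≤ ν A) ∧
      (∀ η : MeasureTheory.Measure ℝ, MemM η → LeCD μ η →
        (∀ A : Set ℝ, MeasurableSet A → η A ≤ ν A) → LeCD η θ) := by
    by_cases hzero : μ = 0
    · -- trivial case: μ = 0, take θ = 0
      refine ⟨0, ⟨inferInstance, MeasureTheory.integrable_zero_measure⟩, ?_, ?_, ?_⟩
      · intro f _ _ _ _
        simp [hzero]
      · intro A _
        simp
      · intro η hηM hηcd _
        haveI := hηM.1
        have hmass : (μ Set.univ).toReal = (η Set.univ).toReal :=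
          pp_mass_eq_of_lecd μ η hηcd
        rw [hzero] at hmass
        simp only [MeasureTheory.Measure.coe_zero, Pi.zero_apply, ENNReal.toReal_zero] at hmass
        have hη0 : η Set.univ = 0 := by
          have := MeasureTheory.measure_ne_top η Set.univ
          exact (ENNReal.toReal_eq_zero_iff _).mp hmass.symm |>.resolve_right this
        have : η = 0 := MeasureTheory.Measure.measure_univ_eq_zero.mp hη0
        intro f _ _ _ _
        simp [this]
    · by_cases hcase : μ Set.univ = ν Set.univ
      · -- equal masses: take θ = ν
        refine ⟨ν, hν, ?_, fun A _ => le_rfl, ?_⟩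
        · exact pp_lecd_of_lepcd_mass μ ν hpcd (by rw [hcase])
        · intro η hηM hηcd hηle
          haveI := hηM.1
          have hmassη : (η Set.univ).toReal = (ν Set.univ).toReal := by
            have := pp_mass_eq_of_lecd μ η hηcd
            rw [← this, hcase]
          have hηuniv : η Set.univ = ν Set.univ :=
            (ENNReal.toReal_eq_toReal_iff' (MeasureTheory.measure_ne_top _ _)
              (MeasureTheory.measure_ne_top _ _)).mp hmassη
          have hηeq : η = ν := pp_eq_of_le_mass η ν hηle hηuniv
          rw [hηeq]
          intro f _ _ _ _
          exact le_rfl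
      · -- main case: 0 < m < ν(ℝ)
        set m : ℝ := (μ Set.univ).toReal with hmdef
        have hm0 : 0 < m := ENNReal.toReal_pos
          (MeasureTheory.Measure.measure_univ_ne_zero.mpr hzero)
          (MeasureTheory.measure_ne_top _ _)
        have hmle : m ≤ (ν Set.univ).toReal := by
          have h1 := hpcd (fun _ => (1:ℝ)) (fun _ => zero_le_one)
            (convexOn_const 1 convex_univ) antitone_const
            (MeasureTheory.integrable_const 1) (MeasureTheory.integrable_const 1)
          simp only [MeasureTheory.integral_const, smul_eq_mul, mul_one] at h1
          exact h1
        have hmne : m ≠ (ν Set.univ).toReal := by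
          intro h
          exact hcase ((ENNReal.toReal_eq_toReal_iff' (MeasureTheory.measure_ne_top _ _)
            (MeasureTheory.measure_ne_top _ _)).mp h)
        have hmlt : m < (ν Set.univ).toReal := lt_of_le_of_ne hmle hmne
        obtain ⟨q, hr, hq⟩ := pp_exists_q ν m hm0 hmlt
        haveI hθfin : MeasureTheory.IsFiniteMeasure (thetaOf ν q m) :=
          pp_thetaOf_isFiniteMeasure ν q m
        refine ⟨thetaOf ν q m, ⟨hθfin, pp_thetaOf_integrable_id ν hν.2 q m⟩, ?_, ?_, ?_⟩
        · exact pp_lecd_thetaOf μ ν q m rfl hr hpcd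
        · exact pp_thetaOf_le ν q m hr hq
        · intro η hηM hηcd hηle
          haveI := hηM.1
          have hmassη : (η Set.univ).toReal = m := (pp_mass_eq_of_lecd μ η hηcd).symm
          have hpcdη : LePCD η ν := by
            intro g hg0 _ _ _ hgν
            exact MeasureTheory.integral_mono_measure
              (MeasureTheory.Measure.le_iff.mpr hηle)
              (MeasureTheory.ae_of_all _ hg0) hgν
          exact pp_lecd_thetaOf η ν q m hmassη hr hpcdη
  obtain ⟨θ, hθ⟩ := hex
  refine ⟨θ, hθ, fun y hy => ?_⟩
  exact pp_lecd_antisymm y θ hy.1 hθ.1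
    (hθ.2.2.2 y hy.1 hy.2.1 hy.2.2.1)
    (hy.2.2.2 θ hθ.1 hθ.2.1 hθ.2.2.1)
end
end

section
/- Let μ, ν ∈ 𝓜. The following are equivalent: (i) μ ≤_pcd ν; (ii) there exists η ∈ 𝓜 with μ ≤_cd η and η(A) ≤ ν(A) for all Borel A ⊆ ℝ; (iii) there exists χ ∈ 𝓜 with μ(A) ≤ χ(A) for all Borel A ⊆ ℝ and χ ≤_cd ν. -/
open MeasureTheory Set Filter

noncomputable section

/-- affine functions are convex -/
lemma convexOn_affine (c d : ℝ) : ConvexOn ℝ Set.univ (fun x : ℝ => c + d * x) := by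
  refine ⟨convex_univ, fun x _ y _ a b ha hb hab => le_of_eq ?_⟩
  have : a • (c + d * x) + b • (c + d * y) = (a + b) * c + d * (a * x + b * y) := by
    simp [smul_eq_mul]; ring
  rw [this, hab, one_mul]
  simp [smul_eq_mul]

/-- composition with neg preserves convexity -/
lemma convexOn_comp_neg {f : ℝ → ℝ} (hf : ConvexOn ℝ Set.univ f) :
    ConvexOn ℝ Set.univ (fun x : ℝ => f (-x)) := by
  refine ⟨convex_univ, fun x _ y _ a b ha hb hab => ?_⟩
  have h := hf.2 (mem_univ (-x)) (mem_univ (-y)) ha hb hab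
  have hxy : a • (-x) + b • (-y) = -(a • x + b • y) := by
    simp [smul_eq_mul]; ring
  rw [hxy] at h
  simpa using h

/-- max with 0 of a convex function is convex -/
lemma convexOn_max_zero {f : ℝ → ℝ} (hf : ConvexOn ℝ Set.univ f) :
    ConvexOn ℝ Set.univ (fun x : ℝ => max (f x) 0) := by
  have h := hf.sup (convexOn_const (0:ℝ) convex_univ)
  exact h

/-- convex function on ℝ is continuous -/
lemma ConvexOn.continuous_univ {f : ℝ → ℝ} (hf : ConvexOn ℝ Set.univ f) : Continuous f := by
  have := hf.continuousOn isOpen_univ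
  rw [← continuousOn_univ]; exact this

/-- existence of a (nonpositive) subgradient for a convex antitone function -/
lemma exists_subgradient {f : ℝ → ℝ} (hf : ConvexOn ℝ Set.univ f) (ha : Antitone f) (b : ℝ) :
    ∃ s : ℝ, s ≤ 0 ∧ ∀ x, f b + s * (x - b) ≤ f x := by
  set S : Set ℝ := (fun u => (f b - f u) / (b - u)) '' Iio b with hS
  have hne : S.Nonempty := ⟨_, ⟨b - 1, by simp, rfl⟩⟩
  have hnonpos : ∀ z ∈ S, z ≤ 0 := by
    rintro z ⟨u, hu, rfl⟩
    apply div_nonpos_of_nonpos_of_nonneg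
    · have := ha (le_of_lt hu); linarith
    · simp only [mem_Iio] at hu; linarith
  have hbdd : BddAbove S := ⟨0, fun z hz => hnonpos z hz⟩
  refine ⟨sSup S, csSup_le hne hnonpos, fun x => ?_⟩
  rcases lt_trichotomy x b with hx | hx | hx
  · have hmem : (f b - f x) / (b - x) ∈ S := ⟨x, hx, rfl⟩
    have h1 : (f b - f x) / (b - x) ≤ sSup S := le_csSup hbdd hmem
    have hbx : (0:ℝ) < b - x := by linarith
    rw [div_le_iff₀ hbx] at h1
    nlinarith
  · subst hx; simp
  · have h2 : sSup S ≤ (f x - f b) / (x - b) := by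
      apply csSup_le hne
      rintro z ⟨u, hu, rfl⟩
      simp only [mem_Iio] at hu
      exact hf.slope_mono_adjacent (mem_univ u) (mem_univ x) hu hx
    have hxb : (0:ℝ) < x - b := by linarith
    rw [le_div_iff₀ hxb] at h2
    nlinarith

/-- clamping a convex function on the left with a tangent line preserves convexity -/
lemma convexOn_clampLeft {f : ℝ → ℝ} (hf : ConvexOn ℝ Set.univ f) {b s : ℝ}
    (hs : ∀ x, f b + s * (x - b) ≤ f x) :
    ConvexOn ℝ Set.univ (fun x => f (max x b) + s * (min x b - b)) := by
  set G : ℝ → ℝ := fun x => f (max x b) + s * (min x b - b) with hG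
  have hGle : ∀ w, w ≤ b → G w = f b + s * (w - b) := by
    intro w hw; simp only [hG, max_eq_right hw, min_eq_left hw]
  have hGge : ∀ w, b ≤ w → G w = f w := by
    intro w hw; simp only [hG, max_eq_left hw, min_eq_right hw, sub_self, mul_zero, add_zero]
  rw [convexOn_iff_slope_mono_adjacent]
  refine ⟨convex_univ, fun x y z _ _ hxy hyz => ?_⟩
  rcases le_total y b with hyb | hby
  · -- x < y ≤ b
    have hxb : x ≤ b := le_of_lt (lt_of_lt_of_le hxy hyb)
    have hL : (G y - G x) / (y - x) = s := by
      rw [hGle x hxb, hGle y hyb]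
      have hyx : y - x ≠ 0 := by linarith
      field_simp
      ring
    rw [hL]
    rcases le_total z b with hzb | hbz
    · have hR : (G z - G y) / (z - y) = s := by
        rw [hGle y hyb, hGle z hzb]
        have hzy : z - y ≠ 0 := by linarith
        field_simp
        ring
      rw [hR]
    · -- y ≤ b ≤ z
      rw [hGle y hyb, hGge z hbz]
      rw [le_div_iff₀ (by linarith : (0:ℝ) < z - y)]
      have := hs z
      nlinarith
  · -- b ≤ y
    rcases le_total b x with hbx | hxb
    · -- all at least b
      rw [hGge x hbx, hGge y hby, hGge z (le_of_lt (lt_of_le_of_lt hby hyz))]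
      exact hf.slope_mono_adjacent (mem_univ x) (mem_univ z) hxy hyz
    · -- x ≤ b ≤ y < z
      have hbz : b ≤ z := le_trans hby (le_of_lt hyz)
      rw [hGle x hxb, hGge y hby, hGge z hbz]
      set R : ℝ := (f z - f y) / (z - y) with hR
      rcases eq_or_lt_of_le hby with hbeq | hblt
      · -- b = y
        subst hbeq
        have h2 : s * (z - b) ≤ f z - f b := by have := hs z; linarith
        rw [div_le_div_iff₀ (by linarith) (by linarith : (0:ℝ) < z - b)]
        nlinarith
      · -- b < y < z
        have h1 : (f y - f b) / (y - b) ≤ R :=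
          hf.slope_mono_adjacent (mem_univ b) (mem_univ z) hblt hyz
        have h2 : s ≤ (f y - f b) / (y - b) := by
          rw [le_div_iff₀ (by linarith : (0:ℝ) < y - b)]
          have := hs y; nlinarith
        have hsR : s ≤ R := le_trans h2 h1
        have h3 : f y - f b ≤ R * (y - b) := by
          rw [div_le_iff₀ (by linarith : (0:ℝ) < y - b)] at h1
          linarith
        rw [div_le_iff₀ (by linarith : (0:ℝ) < y - x)]
        have h4 : s * (b - x) ≤ R * (b - x) :=
          mul_le_mul_of_nonneg_right hsR (by linarith)
        nlinarith

/-- clamping on the right with a tangent line -/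
lemma convexOn_clampRight {f : ℝ → ℝ} (hf : ConvexOn ℝ Set.univ f) {q s : ℝ}
    (hs : ∀ x, f q + s * (x - q) ≤ f x) :
    ConvexOn ℝ Set.univ (fun x => f (min x q) + s * (max x q - q)) := by
  have hF : ConvexOn ℝ Set.univ (fun x : ℝ => f (-x)) := by
    refine ⟨convex_univ, fun x _ y _ a b ha hb hab => ?_⟩
    have h := hf.2 (mem_univ (-x)) (mem_univ (-y)) ha hb hab
    have hxy : a • (-x) + b • (-y) = -(a • x + b • y) := by
      simp [smul_eq_mul]; ring
    rw [hxy] at h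
    simpa using h
  have hs' : ∀ x, (fun x : ℝ => f (-x)) (-q) + (-s) * (x - (-q)) ≤ (fun x : ℝ => f (-x)) x := by
    intro x
    have h := hs (-x)
    simp only [neg_neg]
    nlinarith [hs (-x)]
  have hclamp := convexOn_clampLeft hF hs'
  have key : (fun x => f (min x q) + s * (max x q - q)) =
      (fun x => (fun x : ℝ => f (-x)) (max x (-q)) + (-s) * (min x (-q) - (-q))) ∘ (fun x : ℝ => -x) := by
    funext x
    simp only [Function.comp_apply]
    have h1 : max (-x) (-q) = -(min x q) := by
      rcases le_total x q with h | h
      · rw [min_eq_left h, max_eq_left (by linarith)]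
      · rw [min_eq_right h, max_eq_right (by linarith)]
    have h2 : min (-x) (-q) = -(max x q) := by
      rcases le_total x q with h | h
      · rw [max_eq_right h, min_eq_right (by linarith)]
      · rw [max_eq_left h, min_eq_left (by linarith)]
    rw [h1, h2]
    ring_nf
  rw [key]
  refine ⟨convex_univ, fun x _ y _ a b ha hb hab => ?_⟩
  have h := hclamp.2 (mem_univ (-x)) (mem_univ (-y)) ha hb hab
  have hxy : a • (-x) + b • (-y) = -(a • x + b • y) := by
    simp [smul_eq_mul]; ring
  rw [hxy] at h
  simpa using h

/-- integrability from linear growth for measures with finite first moment -/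
lemma integrable_of_linear_growth {α : MeasureTheory.Measure ℝ}
    (h1 : MeasureTheory.IsFiniteMeasure α) (h2 : MeasureTheory.Integrable (fun x : ℝ => x) α)
    {w : ℝ → ℝ} (hw : Continuous w) {C D : ℝ} (hbd : ∀ x, |w x| ≤ C + D * |x|) :
    MeasureTheory.Integrable w α := by
  haveI := h1
  have hint : Integrable (fun x : ℝ => C + D * |x|) α :=
    (integrable_const C).add (h2.abs.const_mul D)
  refine hint.mono hw.aestronglyMeasurable (Eventually.of_forall fun x => ?_)
  rw [Real.norm_eq_abs, Real.norm_eq_abs]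
  exact le_trans (hbd x) (le_abs_self _)

/-- the clamp of a nonnegative convex antitone function at a point `b` -/
lemma clamp_spec {φ : ℝ → ℝ} (hφ0 : ∀ x, 0 ≤ φ x) (hφc : ConvexOn ℝ Set.univ φ)
    (hφa : Antitone φ) (b : ℝ) :
    ∃ w : ℝ → ℝ, (∀ x, 0 ≤ w x) ∧ ConvexOn ℝ Set.univ w ∧ Antitone w ∧ Continuous w ∧
      (∀ x, w x ≤ φ x) ∧ (∀ x, b ≤ x → w x = φ x) ∧ (∃ C D : ℝ, 0 ≤ D ∧ ∀ x, |w x| ≤ C + D * |x|) := by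
  obtain ⟨s, hs0, hsub⟩ := exists_subgradient hφc hφa b
  set g : ℝ → ℝ := fun x => φ (max x b) + s * (min x b - b) with hg
  set w : ℝ → ℝ := fun x => max (g x) 0 with hw
  have hgle : ∀ x, x ≤ b → g x = φ b + s * (x - b) := by
    intro x hx; simp only [hg, max_eq_right hx, min_eq_left hx]
  have hgge : ∀ x, b ≤ x → g x = φ x := by
    intro x hx; simp only [hg, max_eq_left hx, min_eq_right hx, sub_self, mul_zero, add_zero]
  have hgφ : ∀ x, g x ≤ φ x := by
    intro x
    rcases le_total x b with hx | hx
    · rw [hgle x hx]; exact hsub x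
    · rw [hgge x hx]
  have hwφ : ∀ x, w x ≤ φ x := fun x => max_le (hgφ x) (hφ0 x)
  have hweq : ∀ x, b ≤ x → w x = φ x := by
    intro x hx
    simp only [hw, hgge x hx]
    exact max_eq_left (hφ0 x)
  have hφcont : Continuous φ := hφc.continuous_univ
  have hgcont : Continuous g := by
    apply Continuous.add
    · exact hφcont.comp (continuous_id.max continuous_const)
    · exact continuous_const.mul ((continuous_id.min continuous_const).sub continuous_const)
  have hwcont : Continuous w := hgcont.max continuous_const
  have hganti : Antitone g := by
    intro x y hxy
    simp only [hg]
    have h1 : φ (max y b) ≤ φ (max x b) := hφa (max_le_max hxy le_rfl)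
    have h2 : s * (min y b - b) ≤ s * (min x b - b) := by
      apply mul_le_mul_of_nonpos_left _ hs0
      have := min_le_min hxy (le_refl b)
      linarith
    linarith
  have hwanti : Antitone w := fun x y hxy => max_le_max (hganti hxy) le_rfl
  have hwconv : ConvexOn ℝ Set.univ w := convexOn_max_zero (convexOn_clampLeft hφc hsub)
  refine ⟨w, fun x => le_max_right _ _, hwconv, hwanti, hwcont, hwφ, hweq,
    φ b + (-s) * |b|, -s, by linarith, fun x => ?_⟩
  have hwnn : 0 ≤ w x := le_max_right _ _
  rw [abs_of_nonneg hwnn]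
  have key : w x ≤ φ b + (-s) * max (b - x) 0 := by
    rcases le_total x b with hx | hx
    · have : g x = φ b + s * (x - b) := hgle x hx
      have hgx0 : 0 ≤ g x := by
        rw [this]
        have := hφ0 b
        nlinarith [hs0]
      have : w x = g x := max_eq_left hgx0
      rw [this, hgle x hx, max_eq_left (by linarith : (0:ℝ) ≤ b - x)]
      nlinarith
    · rw [hweq x hx]
      have h1 : φ x ≤ φ b := hφa hx
      have h2 : (0:ℝ) ≤ (-s) * max (b - x) 0 := by
        apply mul_nonneg (by linarith)
        exact le_max_right _ _
      linarith
  have h3 : max (b - x) 0 ≤ |b| + |x| := by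
    apply max_le
    · calc b - x ≤ |b - x| := le_abs_self _
        _ ≤ |b| + |x| := abs_sub _ _
    · positivity
  nlinarith [h3, neg_nonneg.2 hs0]

/-- approximation by clamps: conclude integral inequality for `φ` from integral
inequalities for all clamped versions -/
lemma clamp_limit {μ ν : MeasureTheory.Measure ℝ} {φ : ℝ → ℝ}
    (hφ0 : ∀ x, 0 ≤ φ x) (hφc : ConvexOn ℝ Set.univ φ) (hφa : Antitone φ)
    (hintμ : MeasureTheory.Integrable φ μ) (hintν : MeasureTheory.Integrable φ ν) (b₀ : ℝ)
    (H : ∀ b : ℝ, b ≤ b₀ → ∀ w : ℝ → ℝ, (∀ x, 0 ≤ w x) → ConvexOn ℝ Set.univ w → Antitone w →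
      Continuous w → (∀ x, w x ≤ φ x) → (∀ x, b ≤ x → w x = φ x) →
      (∃ C D : ℝ, 0 ≤ D ∧ ∀ x, |w x| ≤ C + D * |x|) → ∫ x, w x ∂μ ≤ ∫ x, w x ∂ν) :
    ∫ x, φ x ∂μ ≤ ∫ x, φ x ∂ν := by
  have hφcont : Continuous φ := hφc.continuous_univ
  have spec : ∀ n : ℕ, ∃ w : ℝ → ℝ, (∀ x, 0 ≤ w x) ∧ ConvexOn ℝ Set.univ w ∧ Antitone w ∧
      Continuous w ∧ (∀ x, w x ≤ φ x) ∧ (∀ x, b₀ - n ≤ x → w x = φ x) ∧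
      (∃ C D : ℝ, 0 ≤ D ∧ ∀ x, |w x| ≤ C + D * |x|) :=
    fun n => clamp_spec hφ0 hφc hφa (b₀ - n)
  choose F h0 hc hanti hcont hle heq hgrow using spec
  have hFb : ∀ n, ∀ᵐ x ∂μ, ‖F n x‖ ≤ φ x := by
    intro n
    refine Eventually.of_forall fun x => ?_
    rw [Real.norm_eq_abs, abs_of_nonneg (h0 n x)]
    exact hle n x
  have hFbν : ∀ n, ∀ᵐ x ∂ν, ‖F n x‖ ≤ φ x := by
    intro n
    refine Eventually.of_forall fun x => ?_
    rw [Real.norm_eq_abs, abs_of_nonneg (h0 n x)]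
    exact hle n x
  have hptw : ∀ x : ℝ, Tendsto (fun n => F n x) atTop (nhds (φ x)) := by
    intro x
    apply tendsto_atTop_of_eventually_const (i₀ := Nat.ceil (b₀ - x))
    intro n hn
    apply heq n
    have : (Nat.ceil (b₀ - x) : ℝ) ≤ n := by exact_mod_cast hn
    have h2 : b₀ - x ≤ Nat.ceil (b₀ - x) := Nat.le_ceil _
    linarith
  have hTμ : Tendsto (fun n => ∫ x, F n x ∂μ) atTop (nhds (∫ x, φ x ∂μ)) := by
    apply tendsto_integral_of_dominated_convergence φ
      (fun n => (hcont n).aestronglyMeasurable) hintμ hFb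
    exact Eventually.of_forall fun x => hptw x
  have hTν : Tendsto (fun n => ∫ x, F n x ∂ν) atTop (nhds (∫ x, φ x ∂ν)) := by
    apply tendsto_integral_of_dominated_convergence φ
      (fun n => (hcont n).aestronglyMeasurable) hintν hFbν
    exact Eventually.of_forall fun x => hptw x
  refine le_of_tendsto_of_tendsto' hTμ hTν fun n => ?_
  exact H (b₀ - n) (by simp) (F n) (h0 n) (hc n) (hanti n) (hcont n) (hle n) (heq n) (hgrow n)

open scoped ENNReal in
/-- integral against the truncated-plus-atom measure equals integral against ν,
for functions vanishing on `[q,∞)` -/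
lemma integral_eta {ν : MeasureTheory.Measure ℝ} {q : ℝ} {a : ℝ≥0∞} (ha : a ≠ ⊤) {w : ℝ → ℝ}
    (hcont : Continuous w) (hint : MeasureTheory.Integrable w ν) (hz : ∀ x, q ≤ x → w x = 0) :
    ∫ x, w x ∂(ν.restrict (Set.Iio q) + a • MeasureTheory.Measure.dirac q) = ∫ x, w x ∂ν := by
  have hwq : w q = 0 := hz q le_rfl
  have hdint : MeasureTheory.Integrable w (a • MeasureTheory.Measure.dirac q) := by
    constructor
    · exact hcont.aestronglyMeasurable
    · rw [MeasureTheory.hasFiniteIntegral_iff_norm, MeasureTheory.lintegral_smul_measure,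
        MeasureTheory.lintegral_dirac]
      exact ENNReal.mul_lt_top (lt_top_iff_ne_top.2 ha) ENNReal.ofReal_lt_top
  rw [MeasureTheory.integral_add_measure hint.restrict hdint, MeasureTheory.integral_smul_measure,
    MeasureTheory.integral_dirac, hwq, smul_zero, add_zero]
  have hsplit := MeasureTheory.integral_add_compl (measurableSet_Iio (a := q)) hint
  have hzero : ∫ x in (Set.Iio q)ᶜ, w x ∂ν = 0 := by
    apply MeasureTheory.setIntegral_eq_zero_of_forall_eq_zero
    intro x hx
    rw [Set.compl_Iio] at hx
    exact hz x hx
  linarith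

/-- total mass inequality from the positive convex-decreasing order -/
lemma mass_le_of_lePCD {μ ν : MeasureTheory.Measure ℝ} (hμ : MemM μ) (hν : MemM ν)
    (h : LePCD μ ν) : μ Set.univ ≤ ν Set.univ := by
  haveI := hμ.1; haveI := hν.1
  have h1 := h (fun _ => 1) (fun _ => zero_le_one) (convexOn_const _ convex_univ)
    (antitone_const) (MeasureTheory.integrable_const _) (MeasureTheory.integrable_const _)
  simp only [MeasureTheory.integral_const, smul_eq_mul, mul_one] at h1
  exact (ENNReal.toReal_le_toReal (MeasureTheory.measure_ne_top μ _)
    (MeasureTheory.measure_ne_top ν _)).1 h1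

lemma abs_max_neg_le {f : ℝ → ℝ} (n : ℕ) (x : ℝ) : |max (f x) (-(n:ℝ))| ≤ |f x| := by
  rcases le_total (f x) (-(n:ℝ)) with hfx | hfx
  · have h1 : (n:ℝ) ≤ -f x := by
      have : (0:ℝ) ≤ n := Nat.cast_nonneg n
      linarith
    rw [max_eq_right hfx, abs_neg, Nat.abs_cast]
    exact le_trans h1 (neg_le_abs _)
  · rw [max_eq_left hfx]

/-- when masses agree, `≤_pcd` implies `≤_cd` -/
lemma leCD_of_lePCD_mass_eq {μ ν : MeasureTheory.Measure ℝ} (hμ : MemM μ) (hν : MemM ν)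
    (hpcd : LePCD μ ν) (hm : μ Set.univ = ν Set.univ) : LeCD μ ν := by
  intro f hconv hanti hfμ hfν
  haveI := hμ.1; haveI := hν.1
  have hmass : (μ Set.univ).toReal = (ν Set.univ).toReal := by rw [hm]
  have hfcont : Continuous f := hconv.continuous_univ
  have hintgen : ∀ (ρ : MeasureTheory.Measure ℝ), MeasureTheory.Integrable f ρ → ∀ n : ℕ,
      MeasureTheory.Integrable (fun x => max (f x) (-(n:ℝ))) ρ := by
    intro ρ hint n
    refine hint.abs.mono ((hfcont.max continuous_const).aestronglyMeasurable)
      (Eventually.of_forall fun x => ?_)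
    rw [Real.norm_eq_abs, Real.norm_eq_abs, abs_abs]
    exact abs_max_neg_le n x
  have hstep : ∀ n : ℕ, ∫ x, max (f x) (-(n:ℝ)) ∂μ ≤ ∫ x, max (f x) (-(n:ℝ)) ∂ν := by
    intro n
    have hmc : ConvexOn ℝ Set.univ (fun x => max (f x) (-(n:ℝ))) := by
      have := hconv.sup (convexOn_const (-(n:ℝ)) convex_univ)
      exact this
    have hma : Antitone (fun x => max (f x) (-(n:ℝ))) :=
      fun x y hxy => max_le_max (hanti hxy) le_rfl
    have hintμ := hintgen μ hfμ n
    have hintν := hintgen ν hfν n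
    have hg := hpcd (fun x => max (f x) (-(n:ℝ)) + n)
      (fun x => by have := le_max_right (f x) (-(n:ℝ)); linarith)
      (hmc.add (convexOn_const _ convex_univ))
      (fun x y hxy => by have := hma hxy; simp only; linarith)
      (hintμ.add (MeasureTheory.integrable_const _))
      (hintν.add (MeasureTheory.integrable_const _))
    rw [MeasureTheory.integral_add hintμ (MeasureTheory.integrable_const _),
      MeasureTheory.integral_add hintν (MeasureTheory.integrable_const _),
      MeasureTheory.integral_const, MeasureTheory.integral_const] at hg
    simp only [smul_eq_mul] at hg
    rw [MeasureTheory.measureReal_def, MeasureTheory.measureReal_def, hmass] at hg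
    linarith
  have hT : ∀ (ρ : MeasureTheory.Measure ℝ), MeasureTheory.Integrable f ρ →
      Tendsto (fun n : ℕ => ∫ x, max (f x) (-(n:ℝ)) ∂ρ) atTop (nhds (∫ x, f x ∂ρ)) := by
    intro ρ hint
    apply MeasureTheory.tendsto_integral_of_dominated_convergence (fun x => |f x|)
      (fun n => (hfcont.max continuous_const).aestronglyMeasurable) hint.abs
      (fun n => Eventually.of_forall fun x => by
        rw [Real.norm_eq_abs]; exact abs_max_neg_le n x)
    refine Eventually.of_forall fun x => ?_
    apply tendsto_atTop_of_eventually_const (i₀ := Nat.ceil |f x|)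
    intro n hn
    apply max_eq_left
    have h1 : |f x| ≤ (n:ℝ) := le_trans (Nat.le_ceil _) (by exact_mod_cast hn)
    have := neg_abs_le (f x)
    linarith
  exact le_of_tendsto_of_tendsto' (hT μ hfμ) (hT ν hfν) hstep

open scoped ENNReal in
/-- the key step: `μ ≤_cd η` where `η` is the left-most part of `ν` with the mass of `μ` -/
lemma leCD_eta {μ ν : MeasureTheory.Measure ℝ} (hμ : MemM μ) (hν : MemM ν) (h : LePCD μ ν)
    {q : ℝ} {a : ℝ≥0∞} (ha : a ≠ ⊤)
    (hηM : MemM (ν.restrict (Set.Iio q) + a • MeasureTheory.Measure.dirac q))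
    (hηuniv : (ν.restrict (Set.Iio q) + a • MeasureTheory.Measure.dirac q) Set.univ = μ Set.univ) :
    LeCD μ (ν.restrict (Set.Iio q) + a • MeasureTheory.Measure.dirac q) := by
  classical
  set η : MeasureTheory.Measure ℝ := ν.restrict (Set.Iio q) + a • MeasureTheory.Measure.dirac q
    with hηdef
  intro f hconv hanti hfμ hfη
  haveI := hμ.1; haveI := hν.1; haveI := hηM.1
  have hfcont : Continuous f := hconv.continuous_univ
  obtain ⟨s, hs0, hsub⟩ := exists_subgradient hconv hanti q
  set fq : ℝ → ℝ := fun x => f (min x q) with hfqdef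
  set tld : ℝ → ℝ := fun x => f (min x q) - f q - s * (min x q - q) with htlddef
  set k : ℝ → ℝ := fun x => f q + s * (min x q - q) with hkdef
  have hfqcont : Continuous fq := hfcont.comp (continuous_id.min continuous_const)
  have hkcont : Continuous k :=
    continuous_const.add (continuous_const.mul ((continuous_id.min continuous_const).sub
      continuous_const))
  have htldcont : Continuous tld :=
    (hfqcont.sub continuous_const).sub (continuous_const.mul
      ((continuous_id.min continuous_const).sub continuous_const))
  -- integrability of fq
  have hfqint : ∀ (ρ : MeasureTheory.Measure ℝ), MeasureTheory.IsFiniteMeasure ρ →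
      MeasureTheory.Integrable f ρ → MeasureTheory.Integrable fq ρ := by
    intro ρ hρi hint
    haveI := hρi
    refine (hint.abs.add (MeasureTheory.integrable_const |f q|)).mono
      hfqcont.aestronglyMeasurable (Eventually.of_forall fun x => ?_)
    rw [Real.norm_eq_abs, Real.norm_eq_abs]
    have hb : |fq x| ≤ |f x| + |f q| := by
      rcases le_total x q with hx | hx
      · simp only [hfqdef, min_eq_left hx]
        have := abs_nonneg (f q); linarith
      · simp only [hfqdef, min_eq_right hx]
        have := abs_nonneg (f x); linarith
    exact le_trans hb (le_abs_self _)
  have hkgrow : ∀ x, |k x| ≤ (|f q| + |s| * |q|) + |s| * |x| := by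
    intro x
    have h1 : |k x| ≤ |f q| + |s| * |min x q - q| := by
      simp only [hkdef]
      calc |f q + s * (min x q - q)| ≤ |f q| + |s * (min x q - q)| := abs_add_le _ _
        _ = |f q| + |s| * |min x q - q| := by rw [abs_mul]
    have h2 : |min x q - q| ≤ |x| + |q| := by
      rcases le_total x q with hx | hx
      · rw [min_eq_left hx]
        exact abs_sub x q
      · rw [min_eq_right hx]; simp only [sub_self, abs_zero]; positivity
    nlinarith [abs_nonneg s, mul_le_mul_of_nonneg_left h2 (abs_nonneg s)]
  have hkint : ∀ (ρ : MeasureTheory.Measure ℝ), MemM ρ → MeasureTheory.Integrable k ρ :=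
    fun ρ hρ => integrable_of_linear_growth hρ.1 hρ.2 hkcont hkgrow
  have htldint : ∀ (ρ : MeasureTheory.Measure ℝ), MemM ρ → MeasureTheory.Integrable f ρ →
      MeasureTheory.Integrable tld ρ := by
    intro ρ hρ hint
    have heq : tld = fun x => fq x - k x := by
      funext x; simp only [htlddef, hfqdef, hkdef]; ring
    rw [heq]
    exact (hfqint ρ hρ.1 hint).sub (hkint ρ hρ)
  -- tld properties
  have htld0 : ∀ x, 0 ≤ tld x := by
    intro x
    have := hsub (min x q)
    simp only [htlddef]; linarith
  have htldz : ∀ x, q ≤ x → tld x = 0 := by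
    intro x hx
    simp only [htlddef, min_eq_right hx]; ring
  have htldconv : ConvexOn ℝ Set.univ tld := by
    have h1 := (convexOn_clampRight hconv hsub).add (convexOn_affine (-f q + s*q) (-s))
    have h2 : (fun x => (f (min x q) + s * (max x q - q)) + ((-f q + s*q) + (-s)*x)) = tld := by
      funext x
      simp only [htlddef]
      rcases le_total x q with hx | hx
      · rw [min_eq_left hx, max_eq_right hx]; ring
      · rw [min_eq_right hx, max_eq_left hx]; ring
    rw [← h2]
    exact h1
  have htldanti : Antitone tld := by
    intro x y hxy
    have huv : min x q ≤ min y q := min_le_min hxy le_rfl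
    have hvq : min y q ≤ q := min_le_right _ _
    set u := min x q
    set v := min y q
    show f v - f q - s * (v - q) ≤ f u - f q - s * (u - q)
    rcases eq_or_lt_of_le huv with heq | hlt
    · rw [heq]
    rcases eq_or_lt_of_le hvq with heqq | hltq
    · rw [heqq]; simp only [sub_self, mul_zero]
      have := hsub u; linarith
    · set t : ℝ := (q - v)/(q - u) with ht
      have hqu : (0:ℝ) < q - u := by linarith
      have ht0 : (0:ℝ) ≤ t := div_nonneg (by linarith) (by linarith)
      have ht1 : t ≤ 1 := by rw [ht, div_le_one hqu]; linarith
      have hcomb := hconv.2 (Set.mem_univ u) (Set.mem_univ q) ht0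
        (by linarith : (0:ℝ) ≤ 1 - t) (by ring)
      have hpt : t • u + (1-t) • q = v := by
        rw [smul_eq_mul, smul_eq_mul, ht]
        field_simp
        ring
      rw [hpt] at hcomb
      simp only [smul_eq_mul] at hcomb
      have hkey : t * (u - q) = v - q := by
        rw [ht]; field_simp; ring
      have hglb : (0:ℝ) ≤ f u - f q - s * (u - q) := by have := hsub u; linarith
      nlinarith [mul_nonneg (by linarith : (0:ℝ) ≤ 1 - t) hglb]
  -- integrabilities
  have hfqμ := hfqint μ hμ.1 hfμ
  have hfqη := hfqint η hηM.1 hfη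
  have hkμ := hkint μ hμ
  have hkη := hkint η hηM
  have htldμ := htldint μ hμ hfμ
  have htldη := htldint η hηM hfη
  -- step 1
  have step1 : ∫ x, f x ∂μ ≤ ∫ x, fq x ∂μ := by
    apply MeasureTheory.integral_mono hfμ hfqμ
    intro x
    exact hanti (min_le_left x q)
  have hsumfun : fq = fun x => tld x + k x := by
    funext x; simp only [htlddef, hkdef, hfqdef]; ring
  have step2 : ∫ x, fq x ∂μ = ∫ x, tld x ∂μ + ∫ x, k x ∂μ := by
    rw [hsumfun]; exact MeasureTheory.integral_add htldμ hkμ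
  have step3 : ∫ x, tld x ∂μ ≤ ∫ x, tld x ∂η := by
    apply clamp_limit htld0 htldconv htldanti htldμ htldη q
    intro b hbq w hw0 hwc hwa hwcont hwle hweq hwgrow
    obtain ⟨C, D, hD, hCD⟩ := hwgrow
    have hwμ : MeasureTheory.Integrable w μ := by
      refine htldμ.mono hwcont.aestronglyMeasurable (Eventually.of_forall fun x => ?_)
      rw [Real.norm_eq_abs, Real.norm_eq_abs, abs_of_nonneg (hw0 x)]
      exact le_trans (hwle x) (le_abs_self _)
    have hwνint : MeasureTheory.Integrable w ν := integrable_of_linear_growth hν.1 hν.2 hwcont hCD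
    have h1 : ∫ x, w x ∂μ ≤ ∫ x, w x ∂ν := h w hw0 hwc hwa hwμ hwνint
    have h2 : ∫ x, w x ∂η = ∫ x, w x ∂ν := by
      rw [hηdef]
      exact integral_eta ha hwcont hwνint (fun x hx => by
        rw [hweq x (le_trans hbq hx)]; exact htldz x hx)
    rw [h2]; exact h1
  -- the call function
  set c : ℝ → ℝ := fun x => max (q - x) 0 with hcdef
  have hcc : Continuous c := (continuous_const.sub continuous_id).max continuous_const
  have hc0 : ∀ x, 0 ≤ c x := fun x => le_max_right _ _
  have hcconv : ConvexOn ℝ Set.univ c := by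
    have h1 := convexOn_max_zero (convexOn_affine q (-1))
    have heq : (fun x : ℝ => max (q + (-1)*x) 0) = c := by
      funext x
      have : q + (-1)*x = q - x := by ring
      rw [this]
    rw [← heq]
    exact h1
  have hcanti : Antitone c := fun x y hxy => max_le_max (by linarith) le_rfl
  have hcgrow : ∀ x, |c x| ≤ |q| + 1 * |x| := by
    intro x
    rw [abs_of_nonneg (hc0 x), one_mul]
    apply max_le
    · calc q - x ≤ |q - x| := le_abs_self _
        _ ≤ |q| + |x| := abs_sub _ _
    · positivity
  have hcμ : MeasureTheory.Integrable c μ := integrable_of_linear_growth hμ.1 hμ.2 hcc hcgrow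
  have hcν : MeasureTheory.Integrable c ν := integrable_of_linear_growth hν.1 hν.2 hcc hcgrow
  have hcη : MeasureTheory.Integrable c η := integrable_of_linear_growth hηM.1 hηM.2 hcc hcgrow
  have hcineq : ∫ x, c x ∂μ ≤ ∫ x, c x ∂ν := h c hc0 hcconv hcanti hcμ hcν
  have hceq : ∫ x, c x ∂η = ∫ x, c x ∂ν := by
    rw [hηdef]
    apply integral_eta ha hcc hcν
    intro x hx
    simp only [hcdef]
    exact max_eq_right (by linarith)
  have hmin_c : ∀ x : ℝ, min x q - q = -(c x) := by
    intro x
    simp only [hcdef]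
    rcases le_total x q with hx | hx
    · rw [min_eq_left hx, max_eq_left (by linarith : (0:ℝ) ≤ q - x)]; ring
    · rw [min_eq_right hx, max_eq_right (by linarith : q - x ≤ (0:ℝ))]; ring
  have hkdecomp : ∀ (ρ : MeasureTheory.Measure ℝ), MeasureTheory.IsFiniteMeasure ρ →
      MeasureTheory.Integrable c ρ →
      ∫ x, k x ∂ρ = f q * (ρ Set.univ).toReal - s * (∫ x, c x ∂ρ) := by
    intro ρ hρi hcint
    haveI := hρi
    have hkform : k = fun x => f q + (-s) * c x := by
      funext x; rw [hkdef]; simp only; rw [hmin_c x]; ring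
    rw [hkform, MeasureTheory.integral_add (MeasureTheory.integrable_const _)
      (hcint.const_mul (-s)), MeasureTheory.integral_const,
      MeasureTheory.integral_const_mul]
    simp only [smul_eq_mul, mul_one, MeasureTheory.measureReal_def]
    ring
  have step4 : ∫ x, k x ∂μ ≤ ∫ x, k x ∂η := by
    rw [hkdecomp μ hμ.1 hcμ, hkdecomp η hηM.1 hcη, hηuniv, hceq]
    have hmul : (-s) * (∫ x, c x ∂μ) ≤ (-s) * (∫ x, c x ∂ν) :=
      mul_le_mul_of_nonneg_left hcineq (by linarith)
    nlinarith [hmul]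
  have step5 : ∫ x, tld x ∂η + ∫ x, k x ∂η = ∫ x, fq x ∂η := by
    rw [hsumfun]; exact (MeasureTheory.integral_add htldη hkη).symm
  have step6 : ∫ x, fq x ∂η = ∫ x, f x ∂η := by
    apply MeasureTheory.integral_congr_ae
    have hsubset : {x : ℝ | ¬ fq x = f x} ⊆ Set.Ioi q := by
      intro x hx
      simp only [Set.mem_setOf_eq] at hx
      by_contra hcon
      simp only [Set.mem_Ioi, not_lt] at hcon
      exact hx (by simp only [hfqdef, min_eq_left hcon])
    have hIoi : η (Set.Ioi q) = 0 := by
      rw [hηdef]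
      simp only [MeasureTheory.Measure.add_apply,
        MeasureTheory.Measure.restrict_apply measurableSet_Ioi,
        MeasureTheory.Measure.smul_apply, smul_eq_mul]
      have h1 : Set.Ioi q ∩ Set.Iio q = ∅ := by
        ext x
        simp only [Set.mem_inter_iff, Set.mem_Ioi, Set.mem_Iio, Set.mem_empty_iff_false, iff_false]
        rintro ⟨ha1, ha2⟩; linarith
      rw [h1, measure_empty, MeasureTheory.Measure.dirac_apply' q measurableSet_Ioi,
        Set.indicator_of_notMem (by simp : q ∉ Set.Ioi q)]
      simp
    exact MeasureTheory.ae_iff.2 (measure_mono_null hsubset hIoi)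
  linarith [step1, step2, step3, step4, step5, step6]

open scoped ENNReal in
/-- (i) implies (ii) -/
lemma exists_intermediate_eta {μ ν : MeasureTheory.Measure ℝ} (hμ : MemM μ) (hν : MemM ν)
    (h : LePCD μ ν) :
    ∃ η : MeasureTheory.Measure ℝ, MemM η ∧ LeCD μ η ∧
      ∀ A : Set ℝ, MeasurableSet A → η A ≤ ν A := by
  haveI := hμ.1; haveI := hν.1
  by_cases hμ0 : μ = 0
  · refine ⟨0, ⟨inferInstance, MeasureTheory.integrable_zero_measure⟩, ?_, fun A hA => by simp⟩
    intro f _ _ _ _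
    subst hμ0
    simp [MeasureTheory.integral_zero_measure]
  by_cases hq : ∃ t : ℝ, μ Set.univ ≤ ν (Set.Iic t)
  swap
  · -- masses are equal; take η = ν
    push_neg at hq
    have h1 : ν Set.univ ≤ μ Set.univ := by
      have ht := MeasureTheory.tendsto_measure_Iic_atTop (α := ℝ) ν
      exact le_of_tendsto ht (Eventually.of_forall fun t => le_of_lt (hq t))
    have hmass : μ Set.univ = ν Set.univ := le_antisymm (mass_le_of_lePCD hμ hν h) h1
    exact ⟨ν, hν, leCD_of_lePCD_mass_eq hμ hν h hmass, fun A hA => le_rfl⟩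
  -- main case
  set m := μ Set.univ with hm
  have hm0 : m ≠ 0 := fun h' => hμ0 (MeasureTheory.Measure.measure_univ_eq_zero.1 h')
  have hmtop : m ≠ ⊤ := MeasureTheory.measure_ne_top μ _
  set S : Set ℝ := {t : ℝ | m ≤ ν (Set.Iic t)} with hSdef
  have hSne : S.Nonempty := hq
  have hbdd : BddBelow S := by
    have hempty : ⋂ n : ℕ, Set.Iic (-(n:ℝ)) = ∅ := by
      ext x
      simp only [Set.mem_iInter, Set.mem_Iic, Set.mem_empty_iff_false, iff_false]
      push_neg
      obtain ⟨n, hn⟩ := exists_nat_gt (-x)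
      exact ⟨n, by linarith⟩
    have htend : Tendsto (fun n : ℕ => ν (Set.Iic (-(n:ℝ)))) atTop (nhds 0) := by
      have h2 := MeasureTheory.tendsto_measure_iInter_atTop (μ := ν)
        (s := fun n : ℕ => Set.Iic (-(n:ℝ)))
        (fun n => measurableSet_Iic.nullMeasurableSet)
        (fun i j hij => Set.Iic_subset_Iic.2 (neg_le_neg (by exact_mod_cast hij)))
        ⟨0, MeasureTheory.measure_ne_top _ _⟩
      rw [hempty, measure_empty] at h2
      exact h2
    have hlt : ∀ᶠ n : ℕ in atTop, ν (Set.Iic (-(n:ℝ))) < m :=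
      htend.eventually_lt_const (pos_iff_ne_zero.2 hm0)
    obtain ⟨n, hn⟩ := hlt.exists
    refine ⟨-(n:ℝ), fun t ht => ?_⟩
    by_contra hcon
    push_neg at hcon
    have h3 : ν (Set.Iic t) ≤ ν (Set.Iic (-(n:ℝ))) :=
      measure_mono (Set.Iic_subset_Iic.2 (le_of_lt hcon))
    exact absurd (le_trans ht h3) (not_le.2 hn)
  set q := sInf S with hqdef
  have hup : ∀ t, q < t → m ≤ ν (Set.Iic t) := by
    intro t ht
    obtain ⟨u, huS, hut⟩ := exists_lt_of_csInf_lt hSne ht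
    exact le_trans huS (measure_mono (Set.Iic_subset_Iic.2 (le_of_lt hut)))
  have hq1 : m ≤ ν (Set.Iic q) := by
    have hteq : ⋂ n : ℕ, Set.Iic (q + 1/((n:ℝ)+1)) = Set.Iic q := by
      ext x
      simp only [Set.mem_iInter, Set.mem_Iic]
      constructor
      · intro hx
        by_contra hcon
        push_neg at hcon
        obtain ⟨n, hn⟩ := exists_nat_one_div_lt (by linarith : (0:ℝ) < x - q)
        have := hx n
        linarith
      · intro hx n
        have hpos : (0:ℝ) < 1/((n:ℝ)+1) := by positivity
        linarith
    have hanti : Antitone (fun n : ℕ => Set.Iic (q + 1/((n:ℝ)+1))) := by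
      intro i j hij
      apply Set.Iic_subset_Iic.2
      have : 1/((j:ℝ)+1) ≤ 1/((i:ℝ)+1) := by
        apply one_div_le_one_div_of_le
        · positivity
        · exact_mod_cast add_le_add_left (by exact_mod_cast hij : (i:ℝ) ≤ j) 1
      linarith
    have htend := MeasureTheory.tendsto_measure_iInter_atTop (μ := ν)
      (s := fun n : ℕ => Set.Iic (q + 1/((n:ℝ)+1)))
      (fun n => measurableSet_Iic.nullMeasurableSet) hanti ⟨0, MeasureTheory.measure_ne_top _ _⟩
    rw [hteq] at htend
    refine ge_of_tendsto htend (Eventually.of_forall fun n => hup _ ?_)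
    have hpos : (0:ℝ) < 1/((n:ℝ)+1) := by positivity
    linarith
  have hq2 : ν (Set.Iio q) ≤ m := by
    have hun : ⋃ n : ℕ, Set.Iic (q - 1/((n:ℝ)+1)) = Set.Iio q := by
      ext x
      simp only [Set.mem_iUnion, Set.mem_Iic, Set.mem_Iio]
      constructor
      · rintro ⟨n, hn⟩
        have hpos : (0:ℝ) < 1/((n:ℝ)+1) := by positivity
        linarith
      · intro hx
        obtain ⟨n, hn⟩ := exists_nat_one_div_lt (by linarith : (0:ℝ) < q - x)
        exact ⟨n, by linarith⟩
    have hmono : Monotone (fun n : ℕ => Set.Iic (q - 1/((n:ℝ)+1))) := by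
      intro i j hij
      apply Set.Iic_subset_Iic.2
      have : 1/((j:ℝ)+1) ≤ 1/((i:ℝ)+1) := by
        apply one_div_le_one_div_of_le
        · positivity
        · exact_mod_cast add_le_add_left (by exact_mod_cast hij : (i:ℝ) ≤ j) 1
      linarith
    have htend := MeasureTheory.tendsto_measure_iUnion_atTop (μ := ν) hmono
    rw [hun] at htend
    refine le_of_tendsto htend (Eventually.of_forall fun n => ?_)
    by_contra hcon
    push_neg at hcon
    have hmem : q - 1/((n:ℝ)+1) ∈ S := le_of_lt hcon
    have := csInf_le hbdd hmem
    have hpos : (0:ℝ) < 1/((n:ℝ)+1) := by positivity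
    linarith
  set a : ℝ≥0∞ := m - ν (Set.Iio q) with hadef
  have hafin : a ≠ ⊤ := by
    rw [hadef]
    exact ne_top_of_le_ne_top hmtop tsub_le_self
  set η : MeasureTheory.Measure ℝ :=
    ν.restrict (Set.Iio q) + a • MeasureTheory.Measure.dirac q with hηdef
  have hηuniv : η Set.univ = m := by
    rw [hηdef]
    simp only [MeasureTheory.Measure.add_apply,
      MeasureTheory.Measure.restrict_apply MeasurableSet.univ, Set.univ_inter,
      MeasureTheory.Measure.smul_apply, smul_eq_mul]
    rw [MeasureTheory.Measure.dirac_apply_of_mem (Set.mem_univ q), mul_one, hadef, add_comm]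
    exact tsub_add_cancel_of_le hq2
  have hIicsplit : ν (Set.Iic q) = ν (Set.Iio q) + ν {q} := by
    rw [← Set.Iio_union_right,
      measure_union (by simp [Set.disjoint_singleton_right]) (measurableSet_singleton q)]
  have haq : a ≤ ν {q} := by
    rw [hadef, tsub_le_iff_right, add_comm, ← hIicsplit]
    exact hq1
  have hlemma : ∀ A : Set ℝ, MeasurableSet A → η A ≤ ν A := by
    intro A hA
    rw [hηdef]
    simp only [MeasureTheory.Measure.add_apply, MeasureTheory.Measure.restrict_apply hA,
      MeasureTheory.Measure.smul_apply, smul_eq_mul]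
    rw [MeasureTheory.Measure.dirac_apply' q hA]
    by_cases hqA : q ∈ A
    · rw [Set.indicator_of_mem hqA]
      simp only [Pi.one_apply, mul_one]
      have hdisj : Disjoint (A ∩ Set.Iio q) {q} := by
        simp only [Set.disjoint_singleton_right, Set.mem_inter_iff, not_and]
        intro _
        simp
      calc ν (A ∩ Set.Iio q) + a ≤ ν (A ∩ Set.Iio q) + ν {q} := add_le_add_right haq _
        _ = ν ((A ∩ Set.Iio q) ∪ {q}) := (measure_union hdisj (measurableSet_singleton q)).symm
        _ ≤ ν A := measure_mono (Set.union_subset Set.inter_subset_left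
            (Set.singleton_subset_iff.2 hqA))
    · rw [Set.indicator_of_notMem hqA, mul_zero, add_zero]
      exact measure_mono Set.inter_subset_left
  haveI hηfin : MeasureTheory.IsFiniteMeasure η :=
    ⟨by rw [hηuniv]; exact lt_of_le_of_ne le_top hmtop⟩
  have hηle : η ≤ ν := MeasureTheory.Measure.le_iff.2 hlemma
  have hηM : MemM η := ⟨hηfin, hν.2.mono_measure hηle⟩
  exact ⟨η, hηM, leCD_eta hμ hν h hafin hηM (by rw [hηuniv]), hlemma⟩

/-- (ii) implies (i) -/
lemma lePCD_of_eta {μ ν η : MeasureTheory.Measure ℝ} (hcd : LeCD μ η)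
    (hle : ∀ A : Set ℝ, MeasurableSet A → η A ≤ ν A) : LePCD μ ν := by
  intro f hf0 hconv hanti hfμ hfν
  have hην : η ≤ ν := MeasureTheory.Measure.le_iff.2 hle
  have hfη : MeasureTheory.Integrable f η := hfν.mono_measure hην
  calc ∫ x, f x ∂μ ≤ ∫ x, f x ∂η := hcd f hconv hanti hfμ hfη
    _ ≤ ∫ x, f x ∂ν :=
      MeasureTheory.integral_mono_measure hην (Eventually.of_forall hf0) hfν

/-- (ii) implies (iii) -/
lemma eta_to_chi {μ ν η : MeasureTheory.Measure ℝ} (hμ : MemM μ) (hν : MemM ν)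
    (hηM : MemM η) (hcd : LeCD μ η) (hle : ∀ A : Set ℝ, MeasurableSet A → η A ≤ ν A) :
    ∃ χ : MeasureTheory.Measure ℝ, MemM χ ∧
      (∀ A : Set ℝ, MeasurableSet A → μ A ≤ χ A) ∧ LeCD χ ν := by
  haveI := hμ.1; haveI := hν.1; haveI := hηM.1
  have hην : η ≤ ν := MeasureTheory.Measure.le_iff.2 hle
  set χ : MeasureTheory.Measure ℝ := μ + (ν - η) with hχdef
  have hsub_le : ν - η ≤ ν := MeasureTheory.Measure.sub_le
  have hcancel : ν - η + η = ν := MeasureTheory.Measure.sub_add_cancel_of_le hην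
  haveI hχfin : MeasureTheory.IsFiniteMeasure χ := by
    constructor
    rw [hχdef, MeasureTheory.Measure.add_apply]
    have h1 := MeasureTheory.measure_lt_top μ Set.univ
    have h2 : (ν - η) Set.univ ≤ ν Set.univ := hsub_le Set.univ
    have h3 := MeasureTheory.measure_lt_top ν Set.univ
    exact ENNReal.add_lt_top.2 ⟨h1, lt_of_le_of_lt h2 h3⟩
  have hχM : MemM χ := ⟨hχfin, hμ.2.add_measure (hν.2.mono_measure hsub_le)⟩
  refine ⟨χ, hχM, fun A hA => ?_, ?_⟩
  · rw [hχdef, MeasureTheory.Measure.add_apply]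
    exact le_add_right le_rfl
  · intro f hconv hanti hfχ hfν
    have hμχ : μ ≤ χ := by rw [hχdef]; exact MeasureTheory.Measure.le_add_right le_rfl
    have hsχ : ν - η ≤ χ := by rw [hχdef]; exact MeasureTheory.Measure.le_add_left le_rfl
    have hfμ2 : MeasureTheory.Integrable f μ := hfχ.mono_measure hμχ
    have hfsub : MeasureTheory.Integrable f (ν - η) := hfχ.mono_measure hsχ
    have hfη : MeasureTheory.Integrable f η := hfν.mono_measure hην
    have h1 : ∫ x, f x ∂χ = ∫ x, f x ∂μ + ∫ x, f x ∂(ν - η) := by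
      rw [hχdef]
      exact MeasureTheory.integral_add_measure hfμ2 hfsub
    have h2 : ∫ x, f x ∂μ ≤ ∫ x, f x ∂η := hcd f hconv hanti hfμ2 hfη
    have h3 : ∫ x, f x ∂(ν - η) + ∫ x, f x ∂η = ∫ x, f x ∂ν := by
      rw [← MeasureTheory.integral_add_measure hfsub hfη, hcancel]
    linarith
/-- (iii) implies (i) -/
lemma lePCD_of_chi {μ ν χ : MeasureTheory.Measure ℝ} (hμ : MemM μ) (hν : MemM ν)
    (hχM : MemM χ) (hle : ∀ A : Set ℝ, MeasurableSet A → μ A ≤ χ A) (hcd : LeCD χ ν) :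
    LePCD μ ν := by
  intro f hf0 hconv hanti hfμ hfν
  have hμχ : μ ≤ χ := MeasureTheory.Measure.le_iff.2 hle
  apply clamp_limit hf0 hconv hanti hfμ hfν 0
  intro b _ w hw0 hwc hwa hwcont hwle _ hwgrow
  obtain ⟨C, D, hD, hCD⟩ := hwgrow
  have hbound : ∀ (ρ : MeasureTheory.Measure ℝ), MeasureTheory.Integrable f ρ →
      MeasureTheory.Integrable w ρ := by
    intro ρ hint
    refine hint.mono hwcont.aestronglyMeasurable (Eventually.of_forall fun x => ?_)
    rw [Real.norm_eq_abs, Real.norm_eq_abs, abs_of_nonneg (hw0 x)]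
    exact le_trans (hwle x) (le_abs_self (f x))
  have hwμ := hbound μ hfμ
  have hwν := hbound ν hfν
  have hwχ : MeasureTheory.Integrable w χ := integrable_of_linear_growth hχM.1 hχM.2 hwcont hCD
  calc ∫ x, w x ∂μ ≤ ∫ x, w x ∂χ :=
        MeasureTheory.integral_mono_measure hμχ (Eventually.of_forall hw0) hwχ
    _ ≤ ∫ x, w x ∂ν := hcd w hwc hwa hwχ hwν

/-- Lemma 3.2: characterisations of the positive convex-decreasing order. -/
theorem lePCD_iff_exists_intermediate
    (μ ν : MeasureTheory.Measure ℝ) (hμ : MemM μ) (hν : MemM ν) :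
    (LePCD μ ν ↔ ∃ η : MeasureTheory.Measure ℝ, MemM η ∧ LeCD μ η ∧
      ∀ A : Set ℝ, MeasurableSet A → η A ≤ ν A) ∧
    (LePCD μ ν ↔ ∃ χ : MeasureTheory.Measure ℝ, MemM χ ∧
      (∀ A : Set ℝ, MeasurableSet A → μ A ≤ χ A) ∧ LeCD χ ν) := by
  constructor
  · constructor
    · exact fun h => exists_intermediate_eta hμ hν h
    · rintro ⟨η, hηM, hcd, hle⟩
      exact lePCD_of_eta hcd hle
  · constructor
    · intro h
      obtain ⟨η, hηM, hcd, hle⟩ := exists_intermediate_eta hμ hν h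
      exact eta_to_chi hμ hν hηM hcd hle
    · rintro ⟨χ, hχM, hle, hcd⟩
      exact lePCD_of_chi hμ hν hχM hle hcd
end
end
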